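/- arXiv:1504.02947 — 7 statements merged into one kernel-verified Lean document; each statement's English description precedes it below -/
import Mathlib

section
/- For every weighted game arena with partial observation G, every threshold ν ∈ ℚ and every window size bound lmax ≥ 1: Fix(ν,lmax) ⊆ MPInf(ν), Bnd(ν) ⊆ MPInf(ν), and MPInf(ν) ⊆ MPSup(ν). In particular every play all of whose concretizations eventually have all their windows (of some bounded length) closed with average weight at least ν has mean-payoff (liminf) at least ν on every concretization. -/
open scoped Classical

/-- A weighted game arena with partial observation. -/
structure WGA where
  Q : Type
  fintypeQ : Fintype Q
  qI : Q
  A : Type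
  fintypeA : Fintype A
  nonemptyA : Nonempty A
  Δ : Q → A → Q → Prop
  total : ∀ q a, ∃ q', Δ q a q'
  w : Q → A → Q → ℤ
  Obs : Set (Set Q)
  obs_empty : ∅ ∉ Obs
  obs_partition : ∀ q : Q, ∃! o, o ∈ Obs ∧ q ∈ o

attribute [instance] WGA.fintypeQ WGA.fintypeA WGA.nonemptyA

namespace WGA

variable (G : WGA)

/-- A concrete path compatible with the given sequences of observations and actions. -/
def Concretizes (obs : ℕ → Set G.Q) (act : ℕ → G.A) (π : ℕ → G.Q) : Prop :=
  (∀ i, π i ∈ obs i) ∧ ∀ i, G.Δ (π i) (act i) (π (i + 1))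

/-- Plays: infinite abstract paths starting at the initial observation. -/
def IsPlay (obs : ℕ → Set G.Q) (act : ℕ → G.A) : Prop :=
  (∀ i, obs i ∈ G.Obs) ∧ G.qI ∈ obs 0 ∧ ∃ π, G.Concretizes obs act π

/-- Sum of the `j` transition weights starting at position `i`. -/
def winSum (π : ℕ → G.Q) (act : ℕ → G.A) (i j : ℕ) : ℤ :=
  ∑ k ∈ Finset.range j, G.w (π (i + k)) (act (i + k)) (π (i + k + 1))

/-- Good window at position `i` with window size bound `lmax`. -/
def GW (ν : ℚ) (i lmax : ℕ) (π : ℕ → G.Q) (act : ℕ → G.A) : Prop :=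
  ∃ j, 1 ≤ j ∧ j ≤ lmax ∧ ν ≤ (G.winSum π act i j : ℚ) / (j : ℚ)

def DirFix (ν : ℚ) (lmax : ℕ) (obs : ℕ → Set G.Q) (act : ℕ → G.A) : Prop :=
  ∀ π, G.Concretizes obs act π → ∀ i, G.GW ν i lmax π act

def UFix (ν : ℚ) (lmax : ℕ) (obs : ℕ → Set G.Q) (act : ℕ → G.A) : Prop :=
  ∃ i, ∀ π, G.Concretizes obs act π → ∀ j, i ≤ j → G.GW ν j lmax π act

def Fix (ν : ℚ) (lmax : ℕ) (obs : ℕ → Set G.Q) (act : ℕ → G.A) : Prop :=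
  ∀ π, G.Concretizes obs act π → ∃ i, ∀ j, i ≤ j → G.GW ν j lmax π act

def UDirBnd (ν : ℚ) (obs : ℕ → Set G.Q) (act : ℕ → G.A) : Prop :=
  ∃ lmax, 1 ≤ lmax ∧ ∀ π, G.Concretizes obs act π → ∀ i, G.GW ν i lmax π act

def DirBnd (ν : ℚ) (obs : ℕ → Set G.Q) (act : ℕ → G.A) : Prop :=
  ∀ π, G.Concretizes obs act π → ∃ lmax, 1 ≤ lmax ∧ ∀ i, G.GW ν i lmax π act

def UBnd (ν : ℚ) (obs : ℕ → Set G.Q) (act : ℕ → G.A) : Prop :=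
  ∃ lmax, 1 ≤ lmax ∧ ∃ i, ∀ π, G.Concretizes obs act π → ∀ j, i ≤ j → G.GW ν j lmax π act

def Bnd (ν : ℚ) (obs : ℕ → Set G.Q) (act : ℕ → G.A) : Prop :=
  ∀ π, G.Concretizes obs act π → ∃ lmax, 1 ≤ lmax ∧ ∃ i, ∀ j, i ≤ j → G.GW ν j lmax π act

noncomputable def MPinf (π : ℕ → G.Q) (act : ℕ → G.A) : ℝ :=
  Filter.liminf (fun n : ℕ => (G.winSum π act 0 n : ℝ) / (n : ℝ)) Filter.atTop

noncomputable def MPsup (π : ℕ → G.Q) (act : ℕ → G.A) : ℝ :=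
  Filter.limsup (fun n : ℕ => (G.winSum π act 0 n : ℝ) / (n : ℝ)) Filter.atTop

def MPInfObj (ν : ℚ) (obs : ℕ → Set G.Q) (act : ℕ → G.A) : Prop :=
  ∀ π, G.Concretizes obs act π → (ν : ℝ) ≤ G.MPinf π act

def MPSupObj (ν : ℚ) (obs : ℕ → Set G.Q) (act : ℕ → G.A) : Prop :=
  ∀ π, G.Concretizes obs act π → (ν : ℝ) ≤ G.MPsup π act

/-- The finite history (prefix) of a play after `n` steps, ending with `obs n`. -/
def hist (obs : ℕ → Set G.Q) (act : ℕ → G.A) (n : ℕ) : List (Set G.Q × G.A) :=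
  (List.range n).map fun i => (obs i, act i)

/-- A play is consistent with an observation-based strategy of Eve. -/
def Consistent (str : List (Set G.Q × G.A) → Set G.Q → G.A)
    (obs : ℕ → Set G.Q) (act : ℕ → G.A) : Prop :=
  ∀ n, act n = str (G.hist obs act n) (obs n)

/-- Eve wins an objective if some observation-based strategy forces it on all plays. -/
def Wins (V : (ℕ → Set G.Q) → (ℕ → G.A) → Prop) : Prop :=
  ∃ str : List (Set G.Q × G.A) → Set G.Q → G.A,
    ∀ obs act, G.IsPlay obs act → G.Consistent str obs act → V obs act

/-- σ-successors of a set of states. -/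
def postSet (σ : G.A) (s : Set G.Q) : Set G.Q := {q' | ∃ q ∈ s, G.Δ q σ q'}

end WGA


open Filter Topology in
private lemma wmp_aux (G : WGA) (π : ℕ → G.Q) (act : ℕ → G.A) (ν : ℚ) (lmax i : ℕ)
    (B : ℤ) (hB0 : 0 ≤ B) (hB : ∀ q a q', |G.w q a q'| ≤ B)
    (h : ∀ j, i ≤ j → G.GW ν j lmax π act) : (ν : ℝ) ≤ G.MPinf π act := by
  classical
  -- additivity of winSum
  have wadd : ∀ a b c : ℕ, G.winSum π act a (b + c)
      = G.winSum π act a b + G.winSum π act (a + b) c := by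
    intro a b c
    unfold WGA.winSum
    rw [Finset.sum_range_add]
    congr 1
    apply Finset.sum_congr rfl
    intro k _
    simp [add_assoc]
  -- bound on winSum
  have wbound : ∀ a b : ℕ, |G.winSum π act a b| ≤ (b : ℤ) * B := by
    intro a b
    calc |G.winSum π act a b| ≤ ∑ k ∈ Finset.range b, |G.w (π (a + k)) (act (a + k)) (π (a + k + 1))| :=
          Finset.abs_sum_le_sum_abs _ _
      _ ≤ ∑ _k ∈ Finset.range b, B := Finset.sum_le_sum fun k _ => hB _ _ _
      _ = (b : ℤ) * B := by simp [mul_comm]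
  -- the window decomposition
  set F : ℕ → ℕ := fun m => if hm : i ≤ m then (h m hm).choose else 1 with hF
  have hF1 : ∀ m, 1 ≤ F m := by
    intro m
    by_cases hm : i ≤ m
    · simp only [hF, dif_pos hm]
      exact (h m hm).choose_spec.1
    · simp [hF, dif_neg hm]
  have hFl : ∀ m, i ≤ m → F m ≤ lmax := by
    intro m hm
    simp only [hF, dif_pos hm]
    exact (h m hm).choose_spec.2.1
  have hFgood : ∀ m, i ≤ m → (ν : ℚ) * (F m : ℚ) ≤ (G.winSum π act m (F m) : ℚ) := by
    intro m hm
    have hspec := (h m hm).choose_spec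
    have h1 : (0 : ℚ) < ((h m hm).choose : ℚ) := by exact_mod_cast hspec.1
    have := hspec.2.2
    rw [le_div_iff₀ h1] at this
    simpa only [hF, dif_pos hm] using this
  set p : ℕ → ℕ := fun k => Nat.rec i (fun _ pk => pk + F pk) k with hp
  have hp0 : p 0 = i := rfl
  have hps : ∀ k, p (k + 1) = p k + F (p k) := fun k => rfl
  have hpi : ∀ k, i ≤ p k := by
    intro k
    induction k with
    | zero => exact le_of_eq hp0.symm
    | succ k ih => rw [hps]; omega
  have hplb : ∀ k, i + k ≤ p k := by
    intro k
    induction k with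
    | zero => omega
    | succ k ih => have := hF1 (p k); rw [hps]; omega
  -- key: sum up to p k
  have key : ∀ k, (G.winSum π act 0 i : ℚ) + ν * ((p k : ℚ) - (i : ℚ))
      ≤ (G.winSum π act 0 (p k) : ℚ) := by
    intro k
    induction k with
    | zero => rw [hp0]; simp
    | succ k ih =>
      have hsplit : G.winSum π act 0 (p (k + 1))
          = G.winSum π act 0 (p k) + G.winSum π act (p k) (F (p k)) := by
        rw [hps, wadd 0 (p k) (F (p k))]
        simp
      have hgood := hFgood (p k) (hpi k)
      have hcast : ((p (k + 1) : ℕ) : ℚ) = (p k : ℚ) + (F (p k) : ℚ) := by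
        rw [hps]; push_cast; ring
      rw [hsplit, hcast]
      push_cast
      push_cast at ih
      linarith
  -- the constant
  set C : ℚ := |(G.winSum π act 0 i : ℚ)| + |ν| * ((lmax : ℚ) + (i : ℚ)) + (lmax : ℚ) * (B : ℚ)
    with hC
  have hB0' : (0 : ℚ) ≤ (B : ℚ) := by exact_mod_cast hB0
  have hC0 : 0 ≤ C := by
    have := abs_nonneg (G.winSum π act 0 i : ℚ)
    have := abs_nonneg ν
    have h1 : (0:ℚ) ≤ (lmax : ℚ) := by positivity
    have h2 : (0:ℚ) ≤ (i : ℚ) := by positivity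
    nlinarith
  -- main estimate
  have main : ∀ n, i ≤ n → (ν : ℚ) * (n : ℚ) - C ≤ (G.winSum π act 0 n : ℚ) := by
    intro n hn
    have hex : ∃ k, n < p (k + 1) := ⟨n, by have := hplb (n + 1); omega⟩
    set k := Nat.find hex with hk
    have hk2 : n < p (k + 1) := Nat.find_spec hex
    have hk1 : p k ≤ n := by
      rcases Nat.eq_zero_or_pos k with h0 | h0
      · rw [h0, hp0]; exact hn
      · have hkm : ¬ n < p (k - 1 + 1) := by
          rw [hk]
          exact Nat.find_min hex (by rw [← hk]; omega)
        have hkk : k - 1 + 1 = k := by omega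
        rw [hkk] at hkm
        omega
    have hm : n - p k ≤ lmax := by
      have := hFl (p k) (hpi k)
      have := hps k
      omega
    have hsplit : G.winSum π act 0 n
        = G.winSum π act 0 (p k) + G.winSum π act (p k) (n - p k) := by
      have : n = p k + (n - p k) := by omega
      rw [this, wadd 0 (p k) (n - p k)]
      simp
    have htail : -((lmax : ℚ) * (B : ℚ)) ≤ (G.winSum π act (p k) (n - p k) : ℚ) := by
      have h1 := wbound (p k) (n - p k)
      have h2 : |(G.winSum π act (p k) (n - p k) : ℚ)| ≤ ((n - p k : ℕ) : ℚ) * (B : ℚ) := by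
        exact_mod_cast h1
      have h3 : ((n - p k : ℕ) : ℚ) ≤ (lmax : ℚ) := by exact_mod_cast hm
      have h4 := neg_abs_le (G.winSum π act (p k) (n - p k) : ℚ)
      nlinarith
    have hkey := key k
    -- estimate ν * (p k - i) ≥ ν * n - |ν| * (lmax + i)
    have hcast1 : (i : ℚ) ≤ (p k : ℚ) := by exact_mod_cast hpi k
    have hcast2 : (p k : ℚ) ≤ (n : ℚ) := by exact_mod_cast hk1
    have hcast3 : (n : ℚ) - (p k : ℚ) ≤ (lmax : ℚ) := by
      have : (n : ℚ) - (p k : ℚ) = ((n - p k : ℕ) : ℚ) := by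
        push_cast [Nat.cast_sub hk1]; ring
      rw [this]; exact_mod_cast hm
    have hnu : ν * ((n : ℚ) - (p k : ℚ) + (i : ℚ)) ≤ |ν| * ((lmax : ℚ) + (i : ℚ)) := by
      have hx0 : (0:ℚ) ≤ (n : ℚ) - (p k : ℚ) + (i : ℚ) := by
        have : (0:ℚ) ≤ (i : ℚ) := by positivity
        linarith
      have h5 : ν * ((n : ℚ) - (p k : ℚ) + (i : ℚ)) ≤ |ν| * ((n : ℚ) - (p k : ℚ) + (i : ℚ)) :=
        mul_le_mul_of_nonneg_right (le_abs_self ν) hx0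
      have h6 : |ν| * ((n : ℚ) - (p k : ℚ) + (i : ℚ)) ≤ |ν| * ((lmax : ℚ) + (i : ℚ)) :=
        mul_le_mul_of_nonneg_left (by linarith) (abs_nonneg ν)
      linarith
    have habs := neg_abs_le (G.winSum π act 0 i : ℚ)
    have hSn : (G.winSum π act 0 n : ℚ)
        = (G.winSum π act 0 (p k) : ℚ) + (G.winSum π act (p k) (n - p k) : ℚ) := by
      exact_mod_cast congrArg (fun z : ℤ => (z : ℚ)) hsplit
    rw [hC]
    nlinarith [hkey, htail, hnu, habs]
  -- pass to the reals
  set f : ℕ → ℝ := fun n => (G.winSum π act 0 n : ℝ) / (n : ℝ) with hf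
  have hCr : (0 : ℝ) ≤ (C : ℝ) := by exact_mod_cast hC0
  have key2 : ∀ᶠ n : ℕ in atTop, (ν : ℝ) - (C : ℝ) / (n : ℝ) ≤ f n := by
    filter_upwards [eventually_ge_atTop (max i 1)] with n hn
    have hni : i ≤ n := le_trans (le_max_left _ _) hn
    have hn1 : 1 ≤ n := le_trans (le_max_right _ _) hn
    have hn0 : (0 : ℝ) < (n : ℝ) := by exact_mod_cast hn1
    have h1 := main n hni
    have h2 : (ν : ℝ) * (n : ℝ) - (C : ℝ) ≤ (G.winSum π act 0 n : ℝ) := by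
      exact_mod_cast h1
    have h3 : ((ν : ℝ) * (n : ℝ) - (C : ℝ)) / (n : ℝ)
        ≤ (G.winSum π act 0 n : ℝ) / (n : ℝ) := by
      gcongr
    have h4 : ((ν : ℝ) * (n : ℝ) - (C : ℝ)) / (n : ℝ) = (ν : ℝ) - (C : ℝ) / (n : ℝ) := by
      field_simp
    linarith [h3, h4 ▸ h3]
  have hg : Tendsto (fun n : ℕ => (ν : ℝ) - (C : ℝ) / (n : ℝ)) atTop (𝓝 (ν : ℝ)) := by
    have h0 : Tendsto (fun n : ℕ => (C : ℝ) / (n : ℝ)) atTop (𝓝 0) :=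
      tendsto_const_div_atTop_nhds_zero_nat _
    have h1 : Tendsto (fun _ : ℕ => (ν : ℝ)) atTop (𝓝 (ν : ℝ)) := tendsto_const_nhds
    simpa using h1.sub h0
  have hbdd : IsBoundedUnder (· ≥ ·) atTop f := by
    refine ⟨(ν : ℝ) - (C : ℝ), ?_⟩
    rw [eventually_map]
    filter_upwards [key2, eventually_ge_atTop 1] with n hn hn1
    have hn0 : (1 : ℝ) ≤ (n : ℝ) := by exact_mod_cast hn1
    have : (C : ℝ) / (n : ℝ) ≤ (C : ℝ) := div_le_self hCr hn0
    linarith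
  have habove : IsBoundedUnder (· ≤ ·) atTop f := by
    refine ⟨(B : ℝ), ?_⟩
    rw [eventually_map]
    filter_upwards [eventually_ge_atTop 1] with n hn1
    have hn0 : (0 : ℝ) < (n : ℝ) := by exact_mod_cast hn1
    have h2 : |(G.winSum π act 0 n : ℝ)| ≤ (n : ℝ) * (B : ℝ) := by
      exact_mod_cast wbound 0 n
    have h3 : (G.winSum π act 0 n : ℝ) ≤ (n : ℝ) * (B : ℝ) :=
      le_trans (le_abs_self _) h2
    rw [hf]
    rw [div_le_iff₀ hn0]
    nlinarith
  calc (ν : ℝ) = liminf (fun n : ℕ => (ν : ℝ) - (C : ℝ) / (n : ℝ)) atTop := hg.liminf_eq.symm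
    _ ≤ liminf f atTop := liminf_le_liminf key2 hg.isBoundedUnder_ge
        habove.isCoboundedUnder_ge
    _ = G.MPinf π act := rfl

open Filter in
private lemma wmp_bound (G : WGA) :
    ∃ B : ℤ, 0 ≤ B ∧ ∀ q a q', |G.w q a q'| ≤ B := by
  classical
  obtain ⟨B, hB⟩ := Finset.exists_le
    ((Finset.univ : Finset (G.Q × G.A × G.Q)).image fun x => |G.w x.1 x.2.1 x.2.2|)
  refine ⟨max B 0, le_max_right _ _, fun q a q' => ?_⟩
  exact le_trans (hB _ (Finset.mem_image_of_mem _ (Finset.mem_univ (q, a, q')))) (le_max_left _ _)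

/-- the window mean-payoff objectives imply the mean-payoff objectives. -/
theorem wmp_implies_mp (G : WGA) (ν : ℚ) (lmax : ℕ) (hlmax : 1 ≤ lmax)
    (obs : ℕ → Set G.Q) (act : ℕ → G.A) (hplay : G.IsPlay obs act) :
    (G.Fix ν lmax obs act → G.MPInfObj ν obs act) ∧
    (G.Bnd ν obs act → G.MPInfObj ν obs act) ∧
    (G.MPInfObj ν obs act → G.MPSupObj ν obs act) := by
  obtain ⟨B, hB0, hB⟩ := wmp_bound G
  refine ⟨?_, ?_, ?_⟩
  · intro hfix π hconc
    obtain ⟨i, hi⟩ := hfix π hconc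
    exact wmp_aux G π act ν lmax i B hB0 hB hi
  · intro hbnd π hconc
    obtain ⟨l, hl1, i, hi⟩ := hbnd π hconc
    exact wmp_aux G π act ν l i B hB0 hB hi
  · intro hinf π hconc
    have h1 := hinf π hconc
    have habove : Filter.IsBoundedUnder (· ≤ ·) Filter.atTop
        (fun n : ℕ => (G.winSum π act 0 n : ℝ) / (n : ℝ)) := by
      refine ⟨(B : ℝ), ?_⟩
      rw [Filter.eventually_map]
      filter_upwards [Filter.eventually_ge_atTop 1] with n hn1
      have hn0 : (0 : ℝ) < (n : ℝ) := by exact_mod_cast hn1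
      have h2 : |(G.winSum π act 0 n : ℝ)| ≤ (n : ℝ) * (B : ℝ) := by
        have : |G.winSum π act 0 n| ≤ (n : ℤ) * B := by
          calc |G.winSum π act 0 n| ≤ ∑ k ∈ Finset.range n,
                |G.w (π (0 + k)) (act (0 + k)) (π (0 + k + 1))| :=
              Finset.abs_sum_le_sum_abs _ _
            _ ≤ ∑ _k ∈ Finset.range n, B := Finset.sum_le_sum fun k _ => hB _ _ _
            _ = (n : ℤ) * B := by simp [mul_comm]
        exact_mod_cast this
      rw [div_le_iff₀ hn0]
      calc (G.winSum π act 0 n : ℝ) ≤ |(G.winSum π act 0 n : ℝ)| := le_abs_self _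
        _ ≤ (n : ℝ) * (B : ℝ) := h2
        _ = (B : ℝ) * (n : ℝ) := by ring
    have hbelow : Filter.IsBoundedUnder (· ≥ ·) Filter.atTop
        (fun n : ℕ => (G.winSum π act 0 n : ℝ) / (n : ℝ)) := by
      refine ⟨-(B : ℝ), ?_⟩
      rw [Filter.eventually_map]
      filter_upwards [Filter.eventually_ge_atTop 1] with n hn1
      have hn0 : (0 : ℝ) < (n : ℝ) := by exact_mod_cast hn1
      have h2 : |(G.winSum π act 0 n : ℝ)| ≤ (n : ℝ) * (B : ℝ) := by
        have : |G.winSum π act 0 n| ≤ (n : ℤ) * B := by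
          calc |G.winSum π act 0 n| ≤ ∑ k ∈ Finset.range n,
                |G.w (π (0 + k)) (act (0 + k)) (π (0 + k + 1))| :=
              Finset.abs_sum_le_sum_abs _ _
            _ ≤ ∑ _k ∈ Finset.range n, B := Finset.sum_le_sum fun k _ => hB _ _ _
            _ = (n : ℤ) * B := by simp [mul_comm]
        exact_mod_cast this
      rw [ge_iff_le, le_div_iff₀ hn0]
      have := neg_abs_le (G.winSum π act 0 n : ℝ)
      nlinarith
    calc ((ν : ℝ)) ≤ G.MPinf π act := h1
      _ ≤ G.MPsup π act := Filter.liminf_le_limsup habove hbelow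
end

section
/- Consider the blind WGA G with states Q = {q_0, q_1}, initial state q_0, a single action a, the single observation {q_0,q_1}, and transitions (q_0,a,q_0) of weight 0, (q_0,a,q_1) of weight −1, and (q_1,a,q_1) of weight 0. Then for every lmax ≥ 1, every play ψ of G satisfies ψ ∈ Fix(0,lmax) and ψ ∉ UFix(0,lmax). Hence the inclusion UFix(ν,lmax) ⊆ Fix(ν,lmax) is strict in general. -/
open scoped Classical

/-- The blind WGA of Figure 3: states `q₀ = false`, `q₁ = true`, a single action,
transitions `q₀ →0 q₀`, `q₀ →(−1) q₁`, `q₁ →0 q₁`, and a single observation. -/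
def G2 : WGA where
  Q := Bool
  fintypeQ := inferInstance
  qI := false
  A := Unit
  fintypeA := inferInstance
  nonemptyA := inferInstance
  Δ := fun q _ q' => q = false ∨ q' = true
  total := fun _ _ => ⟨true, Or.inr rfl⟩
  w := fun q _ q' => if q = false ∧ q' = true then (-1 : ℤ) else 0
  Obs := {Set.univ}
  obs_empty := fun h => Set.empty_ne_univ (Set.mem_singleton_iff.mp h)
  obs_partition := fun q =>
    ⟨Set.univ, ⟨rfl, Set.mem_univ q⟩, fun o ho => Set.mem_singleton_iff.mp ho.1⟩

/-- in the blind arena `G2`, for every `lmax ≥ 1`, every play is in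
`Fix(0,lmax)` but not in `UFix(0,lmax)`; hence `UFix ⊆ Fix` is strict in general. -/
theorem fix_neq_ufix (lmax : ℕ) (hlmax : 1 ≤ lmax)
    (obs : ℕ → Set G2.Q) (act : ℕ → G2.A) (hplay : G2.IsPlay obs act) :
    G2.Fix 0 lmax obs act ∧ ¬ G2.UFix 0 lmax obs act := by
  constructor
  · -- Fix
    intro π hπ
    by_cases h : ∃ n, π n = true
    · obtain ⟨n, hn⟩ := h
      have hstep : ∀ m, π m = true → π (m + 1) = true := by
        intro m hm
        have h2 := hπ.2 m
        simp only [G2, hm] at h2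
        tauto
      have hall : ∀ m, n ≤ m → π m = true := by
        intro m hm
        induction m, hm using Nat.le_induction with
        | base => exact hn
        | succ m hm ih => exact hstep m ih
      refine ⟨n, fun j hj => ⟨1, le_refl 1, hlmax, ?_⟩⟩
      have hw : G2.winSum π act j 1 = 0 := by
        simp [WGA.winSum, G2, hall j hj]
      rw [hw]; norm_num
    · have hfalse : ∀ m, π m = false := by
        intro m
        rcases Bool.eq_false_or_eq_true (π m) with hm | hm
        · exact absurd ⟨m, hm⟩ h
        · exact hm
      refine ⟨0, fun j _ => ⟨1, le_refl 1, hlmax, ?_⟩⟩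
      have hw : G2.winSum π act j 1 = 0 := by
        simp [WGA.winSum, G2, hfalse (j + 1)]
      rw [hw]; norm_num
  · -- ¬ UFix
    rintro ⟨i, hi⟩
    set π : ℕ → G2.Q := fun n => decide (i < n) with hπdef
    have houniv : ∀ n, obs n = Set.univ := fun n => hplay.1 n
    have hconc : G2.Concretizes obs act π := by
      constructor
      · intro k; rw [houniv k]; trivial
      · intro k
        show π k = false ∨ π (k + 1) = true
        by_cases hk : i < k
        · right; show decide (i < k + 1) = true; exact decide_eq_true (by omega)
        · left; show decide (i < k) = false; exact decide_eq_false (by omega)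
    obtain ⟨j, hj1, hj2, hle⟩ := hi π hconc i (le_refl i)
    have hw : G2.winSum π act i j = -1 := by
      have hterm : ∀ k, G2.w (π (i + k)) (act (i + k)) (π (i + k + 1)) =
          if k = 0 then (-1 : ℤ) else 0 := by
        intro k
        rcases Nat.eq_zero_or_pos k with hk | hk
        · subst hk
          have h0 : π i = false := by
            show decide (i < i) = false; exact decide_eq_false (by omega)
          have h1 : π (i + 1) = true := by
            show decide (i < i + 1) = true; exact decide_eq_true (by omega)
          simp [G2, h0, h1]
        · have h1 : π (i + k) = true := by
            show decide (i < i + k) = true; exact decide_eq_true (by omega)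
          simp [G2, h1, hk.ne']
      unfold WGA.winSum
      rw [Finset.sum_congr rfl (fun k _ => hterm k)]
      rw [Finset.sum_ite_eq' (Finset.range j) 0 (fun _ => (-1 : ℤ))]
      simp [Nat.lt_of_lt_of_le Nat.zero_lt_one hj1]
    rw [hw] at hle
    have hjpos : (0 : ℚ) < j := by exact_mod_cast Nat.lt_of_lt_of_le Nat.zero_lt_one hj1
    have : ((-1 : ℤ) : ℚ) / (j : ℚ) < 0 := div_neg_of_neg_of_pos (by norm_num) hjpos
    linarith
end

section
/- Let G be a WGA with W = max{|w(t)| : t ∈ Δ}, let ε > 0 be a rational number, and suppose Eve has a winning strategy λ for the objective MPInf(ε) (or for MPSup(ε)) that has finite memory with memory set M. Then the same strategy λ is winning for Eve for the objective DirFix(0, μ) where μ = ⌈(W · |M| · |Q| / ε) · |M| · |Q|⌉; that is, every play consistent with λ satisfies: every concretization π ∈ γ(ψ) satisfies π ∈ GW(0, i, μ) for all i ≥ 0. -/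
open scoped Classical

namespace WGAAux

open Filter

variable {G : WGA} {M : Type} [Fintype M]

/-- weight of the transition taken at absolute position `j`. -/
def tw (G : WGA) (π : ℕ → G.Q) (act : ℕ → G.A) (j : ℕ) : ℤ :=
  G.w (π j) (act j) (π (j + 1))

lemma winSum_eq (G : WGA) (π : ℕ → G.Q) (act : ℕ → G.A) (i j : ℕ) :
    G.winSum π act i j = ∑ k ∈ Finset.range j, tw G π act (i + k) := rfl

lemma sum_range_add' (f : ℕ → ℤ) (m n : ℕ) :
    ∑ i ∈ Finset.range (m + n), f i
      = ∑ i ∈ Finset.range m, f i + ∑ i ∈ Finset.range n, f (m + i) := by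
  induction n with
  | zero => simp
  | succ n ih =>
      rw [show m + (n + 1) = (m + n) + 1 by omega, Finset.sum_range_succ, ih,
        Finset.sum_range_succ, add_assoc]

lemma winSum_add (G : WGA) (π : ℕ → G.Q) (act : ℕ → G.A) (i j k : ℕ) :
    G.winSum π act i (j + k) = G.winSum π act i j + G.winSum π act (i + j) k := by
  rw [winSum_eq, winSum_eq, winSum_eq, sum_range_add']
  congr 1
  apply Finset.sum_congr rfl
  intro x _
  rw [add_assoc]

lemma winSum_abs_le (G : WGA) (W : ℕ)
    (hW : ∀ p σ q, G.Δ p σ q → |G.w p σ q| ≤ (W : ℤ))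
    (π : ℕ → G.Q) (act : ℕ → G.A)
    (hΔ : ∀ n, G.Δ (π n) (act n) (π (n + 1))) (i j : ℕ) :
    |G.winSum π act i j| ≤ (W : ℤ) * j := by
  rw [winSum_eq]
  calc |∑ k ∈ Finset.range j, tw G π act (i + k)|
      ≤ ∑ k ∈ Finset.range j, |tw G π act (i + k)| := Finset.abs_sum_le_sum_abs _ _
    _ ≤ ∑ _k ∈ Finset.range j, (W : ℤ) :=
        Finset.sum_le_sum fun k _ => hW _ _ _ (hΔ (i + k))
    _ = (W : ℤ) * j := by simp [mul_comm]

def memSeq (m0 : M) (αu : M → Set G.Q → M) (obs : ℕ → Set G.Q) : ℕ → M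
  | 0 => m0
  | n + 1 => αu (memSeq m0 αu obs n) (obs n)

lemma foldl_hist (m0 : M) (αu : M → Set G.Q → M) (obs : ℕ → Set G.Q) (act : ℕ → G.A)
    (n : ℕ) :
    (G.hist obs act n).foldl (fun m p => αu m p.1) m0 = memSeq m0 αu obs n := by
  induction n with
  | zero => rfl
  | succ n ih =>
      show ((List.range (n + 1)).map fun i => (obs i, act i)).foldl
        (fun m p => αu m p.1) m0 = _
      rw [List.range_succ, List.map_append, List.foldl_append]
      exact congrArg (fun m => αu m (obs n)) ih

lemma act_eq (m0 : M) (αu : M → Set G.Q → M) (αo : M → Set G.Q → G.A)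
    (str : List (Set G.Q × G.A) → Set G.Q → G.A)
    (hmem : ∀ (l : List (Set G.Q × G.A)) (o : Set G.Q),
      str l o = αo (l.foldl (fun m p => αu m p.1) m0) o)
    (obs : ℕ → Set G.Q) (act : ℕ → G.A)
    (hcons : G.Consistent str obs act) (n : ℕ) :
    act n = αo (memSeq m0 αu obs n) (obs n) := by
  rw [hcons n, hmem, foldl_hist]

lemma derived_play (m0 : M) (αu : M → Set G.Q → M) (αo : M → Set G.Q → G.A)
    (str : List (Set G.Q × G.A) → Set G.Q → G.A)
    (hmem : ∀ (l : List (Set G.Q × G.A)) (o : Set G.Q),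
      str l o = αo (l.foldl (fun m p => αu m p.1) m0) o)
    (obs : ℕ → Set G.Q) (act : ℕ → G.A) (hplay : G.IsPlay obs act)
    (hcons : G.Consistent str obs act)
    (π : ℕ → G.Q) (hπ : G.Concretizes obs act π)
    (f : ℕ → ℕ) (hf0 : f 0 = 0)
    (hf : ∀ n, f (n + 1) = f n + 1 ∨
        (π (f (n + 1)) = π (f n + 1) ∧
          memSeq m0 αu obs (f (n + 1)) = memSeq m0 αu obs (f n + 1))) :
    G.IsPlay (obs ∘ f) (act ∘ f) ∧ G.Consistent str (obs ∘ f) (act ∘ f) ∧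
      G.Concretizes (obs ∘ f) (act ∘ f) (π ∘ f) ∧
      (∀ i j, G.winSum (π ∘ f) (act ∘ f) i j
        = ∑ k ∈ Finset.range j, tw G π act (f (i + k))) := by
  have hπf : ∀ n, π (f (n + 1)) = π (f n + 1) := by
    intro n
    rcases hf n with h | h
    · rw [h]
    · exact h.1
  have hmemf : ∀ n, memSeq m0 αu (obs ∘ f) n = memSeq m0 αu obs (f n) := by
    intro n
    induction n with
    | zero => rw [hf0]; rfl
    | succ n ih =>
        show αu (memSeq m0 αu (obs ∘ f) n) ((obs ∘ f) n) = _
        rw [ih]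
        rcases hf n with h | h
        · rw [h]; rfl
        · rw [h.2]; rfl
  have hconc : G.Concretizes (obs ∘ f) (act ∘ f) (π ∘ f) := by
    refine ⟨fun n => hπ.1 (f n), fun n => ?_⟩
    show G.Δ (π (f n)) (act (f n)) (π (f (n + 1)))
    rw [hπf n]
    exact hπ.2 (f n)
  have hplay' : G.IsPlay (obs ∘ f) (act ∘ f) := by
    refine ⟨fun n => hplay.1 (f n), ?_, ⟨π ∘ f, hconc⟩⟩
    show G.qI ∈ obs (f 0)
    rw [hf0]
    exact hplay.2.1
  have hcons' : G.Consistent str (obs ∘ f) (act ∘ f) := by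
    intro n
    rw [hmem, foldl_hist, hmemf n]
    exact act_eq m0 αu αo str hmem obs act hcons (f n)
  refine ⟨hplay', hcons', hconc, ?_⟩
  intro i j
  rw [winSum_eq]
  apply Finset.sum_congr rfl
  intro k _
  show tw G (π ∘ f) (act ∘ f) (i + k) = _
  unfold tw
  show G.w (π (f (i + k))) (act (f (i + k))) (π (f (i + k + 1))) = _
  rw [hπf (i + k)]

lemma pump (G : WGA) (W : ℕ)
    (hW : ∀ p σ q, G.Δ p σ q → |G.w p σ q| ≤ (W : ℤ))
    (ε : ℚ)
    (str : List (Set G.Q × G.A) → Set G.Q → G.A)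
    {M : Type} [Fintype M] (m0 : M)
    (αu : M → Set G.Q → M) (αo : M → Set G.Q → G.A)
    (hmem : ∀ (l : List (Set G.Q × G.A)) (o : Set G.Q),
      str l o = αo (l.foldl (fun m p => αu m p.1) m0) o)
    (hwin :
      (∀ obs act, G.IsPlay obs act → G.Consistent str obs act → G.MPInfObj ε obs act) ∨
      (∀ obs act, G.IsPlay obs act → G.Consistent str obs act → G.MPSupObj ε obs act))
    (obs : ℕ → Set G.Q) (act : ℕ → G.A) (hplay : G.IsPlay obs act)
    (hcons : G.Consistent str obs act)
    (π : ℕ → G.Q) (hπ : G.Concretizes obs act π)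
    (a ℓ : ℕ) (hl : 0 < ℓ)
    (hmm : memSeq m0 αu obs (a + ℓ) = memSeq m0 αu obs a)
    (hq : π (a + ℓ) = π a) :
    ε * (ℓ : ℚ) ≤ (G.winSum π act a ℓ : ℚ) := by
  classical
  set idx : ℕ → ℕ := fun n => if n < a then n else a + (n - a) % ℓ with hidx
  have idx0 : idx 0 = 0 := by
    simp only [hidx]
    split
    · rfl
    · next h =>
        have ha : a = 0 := by omega
        subst ha
        simp
  have idx_small : ∀ m, m < a + ℓ → idx m = m := by
    intro m hm
    simp only [hidx]
    split
    · rfl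
    · next h =>
        have h1 : m - a < ℓ := by omega
        rw [Nat.mod_eq_of_lt h1]
        omega
  have mod_succ : ∀ x : ℕ, (x + 1) % ℓ = if x % ℓ + 1 = ℓ then 0 else x % ℓ + 1 := by
    intro x
    conv_lhs => rw [← Nat.mod_add_div x ℓ]
    rw [add_right_comm, Nat.add_mul_mod_self_left]
    split
    · next h => rw [h, Nat.mod_self]
    · next h =>
        have := Nat.mod_lt x hl
        exact Nat.mod_eq_of_lt (by omega)
  have idx_succ : ∀ n, idx (n + 1) = idx n + 1 ∨
      (idx (n + 1) = a ∧ idx n + 1 = a + ℓ) := by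
    intro n
    by_cases h1 : n + 1 < a
    · left
      simp only [hidx]
      rw [if_pos h1, if_pos (by omega)]
    · by_cases h2 : n < a
      · left
        simp only [hidx]
        rw [if_neg h1, if_pos h2]
        have h3 : n + 1 - a = 0 := by omega
        rw [h3, Nat.zero_mod]
        omega
      · have hr : (n - a) % ℓ < ℓ := Nat.mod_lt _ hl
        have hs : n + 1 - a = (n - a) + 1 := by omega
        by_cases h3 : (n - a) % ℓ + 1 = ℓ
        · right
          simp only [hidx]
          rw [if_neg h1, if_neg h2, hs, mod_succ, if_pos h3]
          omega
        · left
          simp only [hidx]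
          rw [if_neg h1, if_neg h2, hs, mod_succ, if_neg h3]
          omega
  have idx_per : ∀ m, a ≤ m → idx (m + ℓ) = idx m := by
    intro m hm
    simp only [hidx]
    rw [if_neg (by omega), if_neg (by omega)]
    have h1 : m + ℓ - a = (m - a) + ℓ := by omega
    rw [h1, Nat.add_mod_right]
  have hf : ∀ n, idx (n + 1) = idx n + 1 ∨
      (π (idx (n + 1)) = π (idx n + 1) ∧
        memSeq m0 αu obs (idx (n + 1)) = memSeq m0 αu obs (idx n + 1)) := by
    intro n
    rcases idx_succ n with h | h
    · left; exact h
    · right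
      rw [h.1, h.2]
      exact ⟨hq.symm, hmm.symm⟩
  obtain ⟨hplay', hcons', hconc', hws'⟩ :=
    derived_play m0 αu αo str hmem obs act hplay hcons π hπ idx idx0 hf
  have hs_eq : ∀ n, G.winSum (π ∘ idx) (act ∘ idx) 0 n
      = ∑ k ∈ Finset.range n, tw G π act (idx k) := by
    intro n
    rw [hws' 0 n]
    apply Finset.sum_congr rfl
    intro k _
    rw [Nat.zero_add]
  set C : ℤ := G.winSum π act a ℓ with hC
  have step1 : ∀ d, G.winSum (π ∘ idx) (act ∘ idx) 0 (a + d + ℓ)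
      = G.winSum (π ∘ idx) (act ∘ idx) 0 (a + d) + C := by
    intro d
    induction d with
    | zero =>
        rw [add_zero]
        have hsplit := winSum_add G (π ∘ idx) (act ∘ idx) 0 a ℓ
        rw [Nat.zero_add] at hsplit
        rw [hsplit]
        congr 1
        rw [hws' a ℓ, hC, winSum_eq]
        apply Finset.sum_congr rfl
        intro k hk
        have hk' := Finset.mem_range.mp hk
        congr 1
        exact idx_small (a + k) (by omega)
    | succ d ih =>
        have hsucc : ∀ m : ℕ, G.winSum (π ∘ idx) (act ∘ idx) 0 (m + 1)
            = G.winSum (π ∘ idx) (act ∘ idx) 0 m + tw G π act (idx m) := by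
          intro m
          rw [hs_eq (m + 1), hs_eq m, Finset.sum_range_succ]
        rw [show a + (d + 1) + ℓ = (a + d + ℓ) + 1 by omega, hsucc, ih,
          idx_per (a + d) (by omega), show a + (d + 1) = (a + d) + 1 by omega, hsucc]
        ring
  have step2 : ∀ (k d : ℕ), G.winSum (π ∘ idx) (act ∘ idx) 0 (a + d + k * ℓ)
      = G.winSum (π ∘ idx) (act ∘ idx) 0 (a + d) + (k : ℤ) * C := by
    intro k
    induction k with
    | zero => intro d; simp
    | succ k ih =>
        intro d
        rw [show a + d + (k + 1) * ℓ = (a + (d + k * ℓ)) + ℓ by ring, step1 (d + k * ℓ),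
          show a + (d + k * ℓ) = a + d + k * ℓ by ring, ih d]
        push_cast
        ring
  have sabs : ∀ n, |G.winSum (π ∘ idx) (act ∘ idx) 0 n| ≤ (W : ℤ) * n :=
    fun n => winSum_abs_le G W hW _ _ hconc'.2 0 n
  set D : ℝ := (C : ℝ) / (ℓ : ℝ) with hD
  have hl0 : (0 : ℝ) < (ℓ : ℝ) := by exact_mod_cast hl
  have hlD : (ℓ : ℝ) * D = (C : ℝ) := by
    rw [hD]
    field_simp
  set B : ℝ := (W : ℝ) * ((a : ℝ) + (ℓ : ℝ)) + ((a : ℝ) + (ℓ : ℝ)) * |D| with hB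
  have key : ∀ n : ℕ, a + ℓ ≤ n →
      |(G.winSum (π ∘ idx) (act ∘ idx) 0 n : ℝ) / (n : ℝ) - D| ≤ B / (n : ℝ) := by
    intro n hn
    have hn0 : (0 : ℝ) < (n : ℝ) := by
      have : 0 < n := by omega
      exact_mod_cast this
    set d := (n - a) % ℓ with hd
    set k := (n - a) / ℓ with hk
    have hdl : d < ℓ := Nat.mod_lt _ hl
    have hnd : n = a + d + k * ℓ := by
      have h1 : d + ℓ * k = n - a := Nat.mod_add_div (n - a) ℓ
      calc n = a + (n - a) := by omega
        _ = a + (d + ℓ * k) := by rw [h1]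
        _ = a + d + k * ℓ := by ring
    have hsn : G.winSum (π ∘ idx) (act ∘ idx) 0 n
        = G.winSum (π ∘ idx) (act ∘ idx) 0 (a + d) + (k : ℤ) * C := by
      rw [hnd]
      exact step2 k d
    have hnum : (G.winSum (π ∘ idx) (act ∘ idx) 0 n : ℝ) - (n : ℝ) * D
        = (G.winSum (π ∘ idx) (act ∘ idx) 0 (a + d) : ℝ) - ((a : ℝ) + (d : ℝ)) * D := by
      rw [hsn]
      push_cast
      rw [hnd]
      push_cast
      linear_combination (-(k : ℝ)) * hlD
    have hden : |(G.winSum (π ∘ idx) (act ∘ idx) 0 n : ℝ) / (n : ℝ) - D|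
        = |(G.winSum (π ∘ idx) (act ∘ idx) 0 n : ℝ) - (n : ℝ) * D| / (n : ℝ) := by
      rw [show (G.winSum (π ∘ idx) (act ∘ idx) 0 n : ℝ) / (n : ℝ) - D
        = ((G.winSum (π ∘ idx) (act ∘ idx) 0 n : ℝ) - (n : ℝ) * D) / (n : ℝ) by
          field_simp]
      rw [abs_div, abs_of_pos hn0]
    rw [hden, hnum]
    have habs1 : |(G.winSum (π ∘ idx) (act ∘ idx) 0 (a + d) : ℝ)|
        ≤ (W : ℝ) * ((a : ℝ) + (d : ℝ)) := by
      exact_mod_cast sabs (a + d)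
    have hbound : |(G.winSum (π ∘ idx) (act ∘ idx) 0 (a + d) : ℝ)
        - ((a : ℝ) + (d : ℝ)) * D| ≤ B := by
      have h3 : |(G.winSum (π ∘ idx) (act ∘ idx) 0 (a + d) : ℝ)
          - ((a : ℝ) + (d : ℝ)) * D|
          ≤ |(G.winSum (π ∘ idx) (act ∘ idx) 0 (a + d) : ℝ)|
            + |((a : ℝ) + (d : ℝ)) * D| := abs_sub _ _
      have h4 : |((a : ℝ) + (d : ℝ)) * D| = ((a : ℝ) + (d : ℝ)) * |D| := by
        rw [abs_mul, abs_of_nonneg (by positivity)]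
      have h5 : ((d : ℝ)) ≤ (ℓ : ℝ) := by exact_mod_cast hdl.le
      have h6 : (0 : ℝ) ≤ (W : ℝ) := by positivity
      have h7 : (0 : ℝ) ≤ |D| := abs_nonneg _
      rw [h4] at h3
      rw [hB]
      nlinarith [habs1]
    exact (div_le_div_iff_of_pos_right hn0).2 hbound
  have hlim : Filter.Tendsto
      (fun n : ℕ => (G.winSum (π ∘ idx) (act ∘ idx) 0 n : ℝ) / (n : ℝ))
      Filter.atTop (nhds D) := by
    rw [tendsto_iff_dist_tendsto_zero]
    apply squeeze_zero' (g := fun n : ℕ => B / (n : ℝ))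
    · filter_upwards with n using dist_nonneg
    · filter_upwards [Filter.eventually_ge_atTop (a + ℓ)] with n hn
      rw [Real.dist_eq]
      exact key n hn
    · exact tendsto_const_div_atTop_nhds_zero_nat B
  have hεD : (ε : ℝ) ≤ D := by
    rcases hwin with hw | hw
    · have h := hw _ _ hplay' hcons' (π ∘ idx) hconc'
      have heq : G.MPinf (π ∘ idx) (act ∘ idx) = D := by
        unfold WGA.MPinf
        exact hlim.liminf_eq
      rwa [heq] at h
    · have h := hw _ _ hplay' hcons' (π ∘ idx) hconc'
      have heq : G.MPsup (π ∘ idx) (act ∘ idx) = D := by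
        unfold WGA.MPsup
        exact hlim.limsup_eq
      rwa [heq] at h
  have hfin : (ε : ℝ) * (ℓ : ℝ) ≤ (C : ℝ) := by
    rw [hD] at hεD
    exact (le_div_iff₀ hl0).1 hεD
  rw [hC] at hfin ⊢
  exact_mod_cast hfin

lemma eps_le_W (G : WGA) (W : ℕ)
    (hW : ∀ p σ q, G.Δ p σ q → |G.w p σ q| ≤ (W : ℤ))
    (ε : ℚ)
    (str : List (Set G.Q × G.A) → Set G.Q → G.A)
    (hwin :
      (∀ obs act, G.IsPlay obs act → G.Consistent str obs act → G.MPInfObj ε obs act) ∨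
      (∀ obs act, G.IsPlay obs act → G.Consistent str obs act → G.MPSupObj ε obs act))
    (obs : ℕ → Set G.Q) (act : ℕ → G.A) (hplay : G.IsPlay obs act)
    (hcons : G.Consistent str obs act) :
    ε ≤ (W : ℚ) := by
  obtain ⟨π, hπ⟩ := hplay.2.2
  have habs : ∀ n : ℕ, |(G.winSum π act 0 n : ℝ) / (n : ℝ)| ≤ (W : ℝ) := by
    intro n
    rcases Nat.eq_zero_or_pos n with h | h
    · subst h
      simp [WGA.winSum]
    · have h1 := winSum_abs_le G W hW π act hπ.2 0 n
      have h2 : |(G.winSum π act 0 n : ℝ)| ≤ (W : ℝ) * (n : ℝ) := by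
        exact_mod_cast h1
      have hn0 : (0 : ℝ) < (n : ℝ) := by exact_mod_cast h
      rw [abs_div, abs_of_pos hn0, div_le_iff₀ hn0]
      exact h2
  have hb1 : Filter.IsBoundedUnder (· ≤ ·) Filter.atTop
      (fun n : ℕ => (G.winSum π act 0 n : ℝ) / (n : ℝ)) :=
    Filter.isBoundedUnder_of ⟨(W : ℝ), fun n => (abs_le.mp (habs n)).2⟩
  have hb2 : Filter.IsBoundedUnder (· ≥ ·) Filter.atTop
      (fun n : ℕ => (G.winSum π act 0 n : ℝ) / (n : ℝ)) :=
    Filter.isBoundedUnder_of ⟨-(W : ℝ), fun n => (abs_le.mp (habs n)).1⟩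
  have hsup : G.MPsup π act ≤ (W : ℝ) := by
    unfold WGA.MPsup
    exact Filter.limsup_le_of_le hb2.isCoboundedUnder_le
      (Filter.Eventually.of_forall fun n => (abs_le.mp (habs n)).2)
  have hinf : G.MPinf π act ≤ (W : ℝ) := by
    have h := Filter.liminf_le_limsup hb1 hb2
    unfold WGA.MPinf
    unfold WGA.MPsup at hsup
    exact le_trans h hsup
  rcases hwin with hw | hw
  · have h := hw obs act hplay hcons π hπ
    have : (ε : ℝ) ≤ (W : ℝ) := le_trans h hinf
    exact_mod_cast this
  · have h := hw obs act hplay hcons π hπ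
    have : (ε : ℝ) ≤ (W : ℝ) := le_trans h hsup
    exact_mod_cast this

lemma main (G : WGA) (W : ℕ)
    (hW : ∀ p σ q, G.Δ p σ q → |G.w p σ q| ≤ (W : ℤ))
    (ε : ℚ) (hε : 0 < ε)
    (str : List (Set G.Q × G.A) → Set G.Q → G.A)
    {M : Type} [Fintype M] (m0 : M)
    (αu : M → Set G.Q → M) (αo : M → Set G.Q → G.A)
    (hmem : ∀ (l : List (Set G.Q × G.A)) (o : Set G.Q),
      str l o = αo (l.foldl (fun m p => αu m p.1) m0) o)
    (hwin :
      (∀ obs act, G.IsPlay obs act → G.Consistent str obs act → G.MPInfObj ε obs act) ∨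
      (∀ obs act, G.IsPlay obs act → G.Consistent str obs act → G.MPSupObj ε obs act)) :
    ∀ L : ℕ, ∀ obs act, G.IsPlay obs act → G.Consistent str obs act →
      ∀ π, G.Concretizes obs act π → ∀ i,
        ε * (L : ℚ) - (ε + (W : ℚ)) * ((Fintype.card M * Fintype.card G.Q : ℕ) : ℚ)
          ≤ (G.winSum π act i L : ℚ) := by
  intro L
  induction L using Nat.strong_induction_on with
  | _ L IH =>
    intro obs act hplay hcons π hπ i
    set K := Fintype.card M * Fintype.card G.Q with hK
    by_cases hLK : L ≤ K
    · have h1 := winSum_abs_le G W hW π act hπ.2 i L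
      have h2 : -((W : ℚ) * (L : ℚ)) ≤ (G.winSum π act i L : ℚ) := by
        have h3 := (abs_le.mp h1).1
        exact_mod_cast h3
      have hLKq : (L : ℚ) ≤ (K : ℚ) := by exact_mod_cast hLK
      have h3 : ε * (L : ℚ) ≤ ε * (K : ℚ) := mul_le_mul_of_nonneg_left hLKq hε.le
      have h4 : (W : ℚ) * (L : ℚ) ≤ (W : ℚ) * (K : ℚ) :=
        mul_le_mul_of_nonneg_left hLKq (by positivity)
      linarith
    · push_neg at hLK
      have hcard : Fintype.card (M × G.Q) < Fintype.card (Fin L) := by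
        rw [Fintype.card_prod, Fintype.card_fin]
        omega
      obtain ⟨x, y, hxy, hpq⟩ := Fintype.exists_ne_map_eq_of_card_lt
        (fun j : Fin L => (memSeq m0 αu obs (i + 1 + (j : ℕ)), π (i + 1 + (j : ℕ)))) hcard
      have hex : ∃ u v : Fin L, (u : ℕ) < (v : ℕ) ∧
          (memSeq m0 αu obs (i + 1 + (u : ℕ)), π (i + 1 + (u : ℕ)))
            = (memSeq m0 αu obs (i + 1 + (v : ℕ)), π (i + 1 + (v : ℕ))) := by
        have hne : (x : ℕ) ≠ (y : ℕ) := fun h => hxy (Fin.ext h)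
        rcases hne.lt_or_gt with h | h
        · exact ⟨x, y, h, hpq⟩
        · exact ⟨y, x, h, hpq.symm⟩
      obtain ⟨u, v, huv, hpq2⟩ := hex
      set a := i + 1 + (u : ℕ) with ha
      set b := i + 1 + (v : ℕ) with hb
      set ℓ := b - a with hℓ
      have hble : b ≤ i + L := by
        have := v.isLt
        omega
      have hab : a + ℓ = b := by omega
      have hl : 0 < ℓ := by omega
      have hmm : memSeq m0 αu obs (a + ℓ) = memSeq m0 αu obs a := by
        rw [hab]
        exact (congrArg Prod.fst hpq2).symm
      have hqq : π (a + ℓ) = π a := by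
        rw [hab]
        exact (congrArg Prod.snd hpq2).symm
      have hC := pump G W hW ε str m0 αu αo hmem hwin obs act hplay hcons π hπ
        a ℓ hl hmm hqq
      set del : ℕ → ℕ := fun n => if n < a then n else n + ℓ with hdel
      have hdel0 : del 0 = 0 := by
        simp only [hdel]
        rw [if_pos (by omega)]
      have hdelf : ∀ n, del (n + 1) = del n + 1 ∨
          (π (del (n + 1)) = π (del n + 1) ∧
            memSeq m0 αu obs (del (n + 1)) = memSeq m0 αu obs (del n + 1)) := by
        intro n
        by_cases h1 : n + 1 < a
        · left
          simp only [hdel]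
          rw [if_pos h1, if_pos (by omega)]
        · by_cases h2 : n < a
          · right
            have e1 : del (n + 1) = a + ℓ := by
              simp only [hdel]
              rw [if_neg h1]
              omega
            have e2 : del n + 1 = a := by
              simp only [hdel]
              rw [if_pos h2]
              omega
            rw [e1, e2]
            exact ⟨hqq, hmm⟩
          · left
            simp only [hdel]
            rw [if_neg h1, if_neg h2]
            omega
      obtain ⟨hplay', hcons', hconc', hws'⟩ :=
        derived_play m0 αu αo str hmem obs act hplay hcons π hπ del hdel0 hdelf
      have hIH := IH (L - ℓ) (by omega) _ _ hplay' hcons' _ hconc' i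
      have hsum : G.winSum (π ∘ del) (act ∘ del) i (L - ℓ) + G.winSum π act a ℓ
          = G.winSum π act i L := by
        set c := i + L - (a + ℓ) with hc
        have hsplit : L - ℓ = (a - i) + c := by omega
        have hia : i + (a - i) = a := by omega
        have hA : G.winSum (π ∘ del) (act ∘ del) i (L - ℓ)
            = G.winSum (π ∘ del) (act ∘ del) i (a - i)
              + G.winSum (π ∘ del) (act ∘ del) a c := by
          rw [hsplit, winSum_add, hia]
        have hB1 : G.winSum (π ∘ del) (act ∘ del) i (a - i)
            = G.winSum π act i (a - i) := by
          rw [hws', winSum_eq]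
          apply Finset.sum_congr rfl
          intro k hk
          have hk' := Finset.mem_range.mp hk
          congr 1
          simp only [hdel]
          rw [if_pos (by omega)]
        have hB2 : G.winSum (π ∘ del) (act ∘ del) a c
            = G.winSum π act (a + ℓ) c := by
          rw [hws', winSum_eq]
          apply Finset.sum_congr rfl
          intro k _
          congr 1
          simp only [hdel]
          rw [if_neg (by omega)]
          omega
        have hC2 : G.winSum π act i L
            = G.winSum π act i (a - i)
              + (G.winSum π act a ℓ + G.winSum π act (a + ℓ) c) := by
          have hL : L = (a - i) + (ℓ + c) := by omega
          rw [hL, winSum_add, hia, winSum_add]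
        rw [hA, hB1, hB2, hC2]
        ring
      have hcast : ((L - ℓ : ℕ) : ℚ) = (L : ℚ) - (ℓ : ℚ) := by
        have hle : ℓ ≤ L := by omega
        push_cast [hle]
        ring
      have hq2 : (G.winSum (π ∘ del) (act ∘ del) i (L - ℓ) : ℚ)
          + (G.winSum π act a ℓ : ℚ) = (G.winSum π act i L : ℚ) := by
        exact_mod_cast hsum
      rw [hcast, mul_sub] at hIH
      linarith

end WGAAux

/-- Theorem 1: a finite-memory strategy of Eve winning for `MPInf(ε)`
(or `MPSup(ε)`) with `ε > 0` is also winning for `DirFix(0, μ)` where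
`μ = ⌈(W·|M|·|Q|/ε)·|M|·|Q|⌉`. -/
theorem finite_memory_mp_implies_dirfix (G : WGA) (W : ℕ)
    (hW : ∀ p σ q, G.Δ p σ q → |G.w p σ q| ≤ (W : ℤ))
    (ε : ℚ) (hε : 0 < ε)
    (str : List (Set G.Q × G.A) → Set G.Q → G.A)
    (M : Type) [Fintype M] (m0 : M)
    (αu : M → Set G.Q → M) (αo : M → Set G.Q → G.A)
    (hmem : ∀ (l : List (Set G.Q × G.A)) (o : Set G.Q),
      str l o = αo (l.foldl (fun m p => αu m p.1) m0) o)
    (hwin :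
      (∀ obs act, G.IsPlay obs act → G.Consistent str obs act → G.MPInfObj ε obs act) ∨
      (∀ obs act, G.IsPlay obs act → G.Consistent str obs act → G.MPSupObj ε obs act)) :
    ∀ obs act, G.IsPlay obs act → G.Consistent str obs act →
      G.DirFix 0
        (Nat.ceil ((((W : ℚ) * (Fintype.card M : ℚ) * (Fintype.card G.Q : ℚ)) / ε) *
          ((Fintype.card M : ℚ) * (Fintype.card G.Q : ℚ)))) obs act := by
    classical
  intro obs act hplay hcons π hπ i
  have hεW : ε ≤ (W : ℚ) :=
    WGAAux.eps_le_W G W hW ε str hwin obs act hplay hcons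
  have hWpos : (0 : ℚ) < (W : ℚ) := lt_of_lt_of_le hε hεW
  have hQpos : 0 < Fintype.card G.Q := Fintype.card_pos_iff.2 ⟨G.qI⟩
  have hMpos : 0 < Fintype.card M := Fintype.card_pos_iff.2 ⟨m0⟩
  set Kn := Fintype.card M * Fintype.card G.Q with hKn
  have hKpos : 0 < Kn := Nat.mul_pos hMpos hQpos
  set μ := Nat.ceil ((((W : ℚ) * (Fintype.card M : ℚ) * (Fintype.card G.Q : ℚ)) / ε) *
      ((Fintype.card M : ℚ) * (Fintype.card G.Q : ℚ))) with hμdef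
  have hcM : (0 : ℚ) < (Fintype.card M : ℚ) := by exact_mod_cast hMpos
  have hcQ : (0 : ℚ) < (Fintype.card G.Q : ℚ) := by exact_mod_cast hQpos
  have hexpr : (0 : ℚ) < (((W : ℚ) * (Fintype.card M : ℚ) * (Fintype.card G.Q : ℚ)) / ε) *
      ((Fintype.card M : ℚ) * (Fintype.card G.Q : ℚ)) :=
    mul_pos (div_pos (mul_pos (mul_pos hWpos hcM) hcQ) hε) (mul_pos hcM hcQ)
  have hμ1 : 1 ≤ μ := by
    rw [hμdef]
    exact Nat.one_le_ceil_iff.2 hexpr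
  have hμge : (((W : ℚ) * (Fintype.card M : ℚ) * (Fintype.card G.Q : ℚ)) / ε) *
      ((Fintype.card M : ℚ) * (Fintype.card G.Q : ℚ)) ≤ (μ : ℚ) := Nat.le_ceil _
  by_cases hK1 : Kn = 1
  · refine ⟨1, le_refl 1, hμ1, ?_⟩
    have hcard1 : Fintype.card (M × G.Q) = 1 := by
      rw [Fintype.card_prod]
      exact hK1
    have hsub : ∀ x y : M × G.Q, x = y := fun x y =>
      Fintype.card_le_one_iff.mp (le_of_eq hcard1) x y
    have hpair : (WGAAux.memSeq m0 αu obs (i + 1), π (i + 1))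
        = (WGAAux.memSeq m0 αu obs i, π i) := hsub _ _
    have hmm : WGAAux.memSeq m0 αu obs (i + 1) = WGAAux.memSeq m0 αu obs i :=
      congrArg Prod.fst hpair
    have hqq : π (i + 1) = π i := congrArg Prod.snd hpair
    have hC := WGAAux.pump G W hW ε str m0 αu αo hmem hwin obs act hplay hcons π hπ
      i 1 one_pos hmm hqq
    have h1 : (0 : ℚ) ≤ (G.winSum π act i 1 : ℚ) := by
      have : (0 : ℚ) ≤ ε * ((1 : ℕ) : ℚ) := by positivity
      linarith
    rw [Nat.cast_one, div_one]
    exact h1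
  · have hK2 : 2 ≤ Kn := by omega
    have hmain := WGAAux.main G W hW ε hε str m0 αu αo hmem hwin μ obs act hplay hcons
      π hπ i
    refine ⟨μ, hμ1, le_refl μ, ?_⟩
    have hKq : (2 : ℚ) ≤ (Kn : ℚ) := by exact_mod_cast hK2
    have hcast : (Fintype.card M : ℚ) * (Fintype.card G.Q : ℚ) = (Kn : ℚ) := by
      rw [hKn]
      push_cast
      ring
    have hεμ : (W : ℚ) * (Kn : ℚ) * (Kn : ℚ) ≤ ε * (μ : ℚ) := by
      have he : (((W : ℚ) * (Fintype.card M : ℚ) * (Fintype.card G.Q : ℚ)) / ε) *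
          ((Fintype.card M : ℚ) * (Fintype.card G.Q : ℚ))
          = (W : ℚ) * (Kn : ℚ) * (Kn : ℚ) / ε := by
        rw [mul_assoc (W : ℚ), hcast, div_mul_eq_mul_div]
      rw [he] at hμge
      rw [div_le_iff₀ hε] at hμge
      linarith [hμge]
    have hinner : (0 : ℚ) ≤ (W : ℚ) * ((Kn : ℚ) - 1) - ε := by
      have hm1 : (W : ℚ) * 1 ≤ (W : ℚ) * ((Kn : ℚ) - 1) :=
        mul_le_mul_of_nonneg_left (by linarith) hWpos.le
      linarith
    have h6 : (0 : ℚ) ≤ (Kn : ℚ) * ((W : ℚ) * ((Kn : ℚ) - 1) - ε) :=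
      mul_nonneg (by linarith) hinner
    have hfinal : (0 : ℚ) ≤ (G.winSum π act i μ : ℚ) := by
      -- hmain : ε * μ - (ε + W) * Kn ≤ winSum
      rw [← hKn] at hmain
      nlinarith [hmain, hεμ, h6]
    exact div_nonneg hfinal (by positivity)
end

section
/- Let G = ⟨Q, q_I, Σ, Δ, Obs⟩ be a non-weighted game arena with partial observation and let 𝒰 ⊆ Q be a set of unsafe states that are trapping (i.e., (u,σ,q) ∈ Δ and u ∈ 𝒰 imply u = q). Define the weight function w mapping each transition (u,σ,q) ∈ Δ with u ∈ 𝒰 to −1 and every other transition to 0, and let G_w be the resulting WGA. Then for every lmax ≥ 1 the following are equivalent: (i) Eve wins the safety objective Safe(𝒰) = {ψ ∈ plays(G) : ∀π ∈ γ(ψ), π never visits a state of 𝒰}; (ii) Eve wins MPInf(0) in G_w; (iii) Eve wins DirFix(0,lmax) in G_w; (iv) Eve wins UFix(0,lmax) in G_w; (v) Eve wins Fix(0,lmax) in G_w. -/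
open scoped Classical

/-- The safety objective: no concretization of the play ever visits an unsafe state. -/
def WGA.SafeObj (G : WGA) (U : Set G.Q) (obs : ℕ → Set G.Q) (act : ℕ → G.A) : Prop :=
  ∀ π, G.Concretizes obs act π → ∀ i, π i ∉ U

section Aux

variable {G : WGA} {U : Set G.Q}

/-- Once in `U`, stay in `U` (and in fact stay put). -/
lemma aux_trap (htrap : ∀ u σ q, u ∈ U → G.Δ u σ q → q = u)
    {obs : ℕ → Set G.Q} {act : ℕ → G.A} {π : ℕ → G.Q}
    (hc : G.Concretizes obs act π) {k : ℕ} (hk : π k ∈ U) :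
    ∀ j, k ≤ j → π j ∈ U := by
  intro j hj
  induction j with
  | zero =>
    have : k = 0 := Nat.le_zero.mp hj
    rwa [← this]
  | succ n ih =>
    rcases Nat.lt_or_ge n k with h | h
    · have : k = n + 1 := le_antisymm hj h
      rwa [← this]
    · have hn : π n ∈ U := ih h
      have := htrap (π n) (act n) (π (n + 1)) hn (hc.2 n)
      rw [this]; exact hn

lemma aux_winSum_safe
    (hw : ∀ p σ q, G.Δ p σ q →
      ((p ∈ U → G.w p σ q = -1) ∧ (p ∉ U → G.w p σ q = 0)))
    {obs : ℕ → Set G.Q} {act : ℕ → G.A} {π : ℕ → G.Q}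
    (hc : G.Concretizes obs act π) (hs : ∀ i, π i ∉ U) (i j : ℕ) :
    G.winSum π act i j = 0 := by
  unfold WGA.winSum
  apply Finset.sum_eq_zero
  intro k _
  exact (hw _ _ _ (hc.2 (i + k))).2 (hs (i + k))

lemma aux_winSum_unsafe
    (htrap : ∀ u σ q, u ∈ U → G.Δ u σ q → q = u)
    (hw : ∀ p σ q, G.Δ p σ q →
      ((p ∈ U → G.w p σ q = -1) ∧ (p ∉ U → G.w p σ q = 0)))
    {obs : ℕ → Set G.Q} {act : ℕ → G.A} {π : ℕ → G.Q}
    (hc : G.Concretizes obs act π) {i : ℕ} (hi : π i ∈ U) (j : ℕ) :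
    G.winSum π act i j = -(j : ℤ) := by
  unfold WGA.winSum
  have : ∀ k ∈ Finset.range j,
      G.w (π (i + k)) (act (i + k)) (π (i + k + 1)) = -1 := by
    intro k _
    exact (hw _ _ _ (hc.2 (i + k))).1 (aux_trap htrap hc hi (i + k) (Nat.le_add_right i k))
  rw [Finset.sum_congr rfl this]
  simp

lemma aux_GW_safe
    (hw : ∀ p σ q, G.Δ p σ q →
      ((p ∈ U → G.w p σ q = -1) ∧ (p ∉ U → G.w p σ q = 0)))
    {obs : ℕ → Set G.Q} {act : ℕ → G.A} {π : ℕ → G.Q}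
    (hc : G.Concretizes obs act π) (hs : ∀ i, π i ∉ U)
    {lmax : ℕ} (hlmax : 1 ≤ lmax) (i : ℕ) :
    G.GW 0 i lmax π act := by
  refine ⟨1, le_refl 1, hlmax, ?_⟩
  rw [aux_winSum_safe hw hc hs]
  norm_num

lemma aux_not_GW
    (htrap : ∀ u σ q, u ∈ U → G.Δ u σ q → q = u)
    (hw : ∀ p σ q, G.Δ p σ q →
      ((p ∈ U → G.w p σ q = -1) ∧ (p ∉ U → G.w p σ q = 0)))
    {obs : ℕ → Set G.Q} {act : ℕ → G.A} {π : ℕ → G.Q}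
    (hc : G.Concretizes obs act π) {i : ℕ} (hi : π i ∈ U) (lmax : ℕ) :
    ¬ G.GW 0 i lmax π act := by
  rintro ⟨j, hj1, _, hle⟩
  rw [aux_winSum_unsafe htrap hw hc hi] at hle
  have hjpos : (0 : ℚ) < (j : ℚ) := by exact_mod_cast Nat.lt_of_lt_of_le Nat.zero_lt_one hj1
  have : ((-(j : ℤ) : ℤ) : ℚ) / (j : ℚ) = -1 := by
    push_cast
    field_simp
  rw [this] at hle
  linarith

/-- Safe concretization forces mean payoff `0`. -/
lemma aux_MPinf_safe
    (hw : ∀ p σ q, G.Δ p σ q →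
      ((p ∈ U → G.w p σ q = -1) ∧ (p ∉ U → G.w p σ q = 0)))
    {obs : ℕ → Set G.Q} {act : ℕ → G.A} {π : ℕ → G.Q}
    (hc : G.Concretizes obs act π) (hs : ∀ i, π i ∉ U) :
    G.MPinf π act = 0 := by
  unfold WGA.MPinf
  have : (fun n : ℕ => (G.winSum π act 0 n : ℝ) / (n : ℝ)) = fun _ => (0 : ℝ) := by
    funext n
    rw [aux_winSum_safe hw hc hs]
    simp
  rw [this, Filter.liminf_const]

lemma aux_MPinf_unsafe
    (htrap : ∀ u σ q, u ∈ U → G.Δ u σ q → q = u)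
    (hw : ∀ p σ q, G.Δ p σ q →
      ((p ∈ U → G.w p σ q = -1) ∧ (p ∉ U → G.w p σ q = 0)))
    {obs : ℕ → Set G.Q} {act : ℕ → G.A} {π : ℕ → G.Q}
    (hc : G.Concretizes obs act π) {k : ℕ} (hk : π k ∈ U) :
    G.MPinf π act = -1 := by
  -- for n ≥ k, winSum 0 n = winSum 0 k + k - n
  have key : ∀ n, k ≤ n → G.winSum π act 0 n = G.winSum π act 0 k + (k : ℤ) - (n : ℤ) := by
    intro n hn
    induction n with
    | zero =>
      have : k = 0 := Nat.le_zero.mp hn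
      subst this; simp
    | succ m ih =>
      rcases Nat.lt_or_ge m k with h | h
      · have : k = m + 1 := le_antisymm hn h
        subst this; simp
      · have hm : π m ∈ U := aux_trap htrap hc hk m h
        have hstep : G.winSum π act 0 (m + 1) = G.winSum π act 0 m
            + G.w (π m) (act m) (π (m + 1)) := by
          unfold WGA.winSum
          rw [Finset.sum_range_succ]
          simp
        rw [hstep, ih h, (hw _ _ _ (hc.2 m)).1 hm]
        push_cast
        ring
  have htend : Filter.Tendsto (fun n : ℕ => (G.winSum π act 0 n : ℝ) / (n : ℝ))
      Filter.atTop (nhds (-1)) := by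
    have h1 : Filter.Tendsto
        (fun n : ℕ => ((G.winSum π act 0 k + (k : ℤ) : ℤ) : ℝ) / (n : ℝ) - 1)
        Filter.atTop (nhds (0 - 1)) :=
      (tendsto_const_div_atTop_nhds_zero_nat _).sub tendsto_const_nhds
    rw [zero_sub] at h1
    apply h1.congr'
    filter_upwards [Filter.eventually_ge_atTop (max k 1)] with n hn
    have hk' : k ≤ n := le_trans (le_max_left _ _) hn
    have hn1 : (1 : ℕ) ≤ n := le_trans (le_max_right _ _) hn
    have hnpos : (0 : ℝ) < (n : ℝ) := by exact_mod_cast hn1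
    rw [key n hk']
    push_cast
    field_simp
  unfold WGA.MPinf
  exact htend.liminf_eq

/-- The pointwise equivalences of objectives for an arbitrary abstract path. -/
lemma aux_equiv
    (htrap : ∀ u σ q, u ∈ U → G.Δ u σ q → q = u)
    (hw : ∀ p σ q, G.Δ p σ q →
      ((p ∈ U → G.w p σ q = -1) ∧ (p ∉ U → G.w p σ q = 0)))
    {lmax : ℕ} (hlmax : 1 ≤ lmax) (obs : ℕ → Set G.Q) (act : ℕ → G.A) :
    (G.SafeObj U obs act ↔ G.MPInfObj 0 obs act) ∧
    (G.SafeObj U obs act ↔ G.DirFix 0 lmax obs act) ∧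
    (G.SafeObj U obs act ↔ G.UFix 0 lmax obs act) ∧
    (G.SafeObj U obs act ↔ G.Fix 0 lmax obs act) := by
  refine ⟨⟨?_, ?_⟩, ⟨?_, ?_⟩, ⟨?_, ?_⟩, ⟨?_, ?_⟩⟩
  · intro hs π hc
    rw [aux_MPinf_safe hw hc (hs π hc)]
    norm_num
  · intro hm π hc i hi
    have := hm π hc
    rw [aux_MPinf_unsafe htrap hw hc hi] at this
    norm_num at this
  · intro hs π hc i
    exact aux_GW_safe hw hc (hs π hc) hlmax i
  · intro hd π hc i hi
    exact aux_not_GW htrap hw hc hi lmax (hd π hc i)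
  · intro hs
    exact ⟨0, fun π hc j _ => aux_GW_safe hw hc (hs π hc) hlmax j⟩
  · rintro ⟨i, hi⟩ π hc k hk
    exact aux_not_GW htrap hw hc (aux_trap htrap hc hk (max i k) (le_max_right i k))
      lmax (hi π hc (max i k) (le_max_left i k))
  · intro hs π hc
    exact ⟨0, fun j _ => aux_GW_safe hw hc (hs π hc) hlmax j⟩
  · intro hf π hc k hk
    obtain ⟨i, hi⟩ := hf π hc
    exact aux_not_GW htrap hw hc (aux_trap htrap hc hk (max i k) (le_max_right i k))
      lmax (hi (max i k) (le_max_left i k))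

lemma aux_wins_congr {V V' : (ℕ → Set G.Q) → (ℕ → G.A) → Prop}
    (h : ∀ obs act, V obs act ↔ V' obs act) : G.Wins V ↔ G.Wins V' := by
  constructor
  · rintro ⟨str, hstr⟩
    exact ⟨str, fun o a hp hc => (h o a).mp (hstr o a hp hc)⟩
  · rintro ⟨str, hstr⟩
    exact ⟨str, fun o a hp hc => (h o a).mpr (hstr o a hp hc)⟩

end Aux

/-- Lemma 1, reduction: for a safety game with trapping unsafe states `U`,
weighted so that transitions leaving `U`-states cost `−1` and all others `0`,
winning safety is equivalent to winning `MPInf(0)`, `DirFix(0,lmax)`, `UFix(0,lmax)`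
and `Fix(0,lmax)`, for any `lmax ≥ 1`. -/
theorem safety_reduction (G : WGA) (U : Set G.Q)
    (htrap : ∀ u σ q, u ∈ U → G.Δ u σ q → q = u)
    (hw : ∀ p σ q, G.Δ p σ q →
      ((p ∈ U → G.w p σ q = -1) ∧ (p ∉ U → G.w p σ q = 0)))
    (lmax : ℕ) (hlmax : 1 ≤ lmax) :
    (G.Wins (G.SafeObj U) ↔ G.Wins (G.MPInfObj 0)) ∧
    (G.Wins (G.SafeObj U) ↔ G.Wins (G.DirFix 0 lmax)) ∧
    (G.Wins (G.SafeObj U) ↔ G.Wins (G.UFix 0 lmax)) ∧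
    (G.Wins (G.SafeObj U) ↔ G.Wins (G.Fix 0 lmax)) := by
  refine ⟨?_, ?_, ?_, ?_⟩ <;> apply aux_wins_congr <;>
    exact fun obs act => by
      have h := aux_equiv htrap hw hlmax obs act
      first
        | exact h.1
        | exact h.2.1
        | exact h.2.2.1
        | exact h.2.2.2
end

section
/- Let ρ = o_0σ_0o_1…o_n be an abstract path of a WGA G, let lmax ≥ 1, let φ ∈ 𝓕 with supp(φ) ⊆ o_0, and let supp⁻¹(ρ,φ) = f_0σ_0f_1…f_n. Let p ∈ supp(f_n) and 1 ≤ l ≤ lmax with l ≤ n. Then f_n(p)_l < 0 if and only if a window of length l is open at p, i.e., there exists a concrete path q_0σ_0q_1…q_n with q_i ∈ o_i for all i, q_0 ∈ supp(φ) and q_n = p, such that Σ_{j=n−l}^{m} w(q_j,σ_j,q_{j+1}) < 0 for every m with n−l ≤ m < n. -/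
open scoped Classical

namespace WGA

variable (G : WGA)

/-- Elements of the function space 𝓕 (validity constraints are given by `ValidF`). -/
def FMap := G.Q → Option (ℕ → ℤ)

/-- The support of an element of 𝓕. -/
def fsupp (f : FMap G) : Set G.Q := {q | f q ≠ none}

/-- `f(q)_i`, the value of `f` at state `q` and window index `i`. -/
def fval (f : FMap G) (q : G.Q) (i : ℕ) : ℤ := ((f q).getD fun _ => 0) i

/-- Membership in 𝓕: values at indices `1,…,lmax` lie in `{−W·lmax,…,0}`
(values at other indices are normalized to `0`). -/
def ValidF (lmax W : ℕ) (f : FMap G) : Prop :=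
  ∀ q g, f q = some g →
    (∀ i, 1 ≤ i → i ≤ lmax → -((W : ℤ) * (lmax : ℤ)) ≤ g i ∧ g i ≤ 0) ∧
    (∀ i, i = 0 ∨ lmax < i → g i = 0)

def Fset (lmax W : ℕ) : Set (FMap G) := {f | G.ValidF lmax W f}

/-- The set whose minimum is `ζ(q)` in the definition of σ-successor. -/
def zetaSet (f1 : FMap G) (σ : G.A) (q : G.Q) (j : ℕ) : Set ℤ :=
  if j = 1 then {x | ∃ p ∈ G.fsupp f1, G.Δ p σ q ∧ x = G.w p σ q}
  else {x | ∃ p ∈ G.fsupp f1, G.Δ p σ q ∧ G.fval f1 p (j - 1) < 0 ∧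
        x = G.fval f1 p (j - 1) + G.w p σ q}

/-- `v = max(−W·lmax, min(0, min Z))`, where the minimum of the empty set is `+∞`. -/
def succVal (lmax W : ℕ) (Z : Set ℤ) (v : ℤ) : Prop :=
  (Z = ∅ ∧ v = max (-((W : ℤ) * (lmax : ℤ))) 0) ∨
  ∃ z, IsLeast Z z ∧ v = max (-((W : ℤ) * (lmax : ℤ))) (min 0 z)

/-- `f2` is a σ-successor of `f1`. -/
def IsSucc (lmax W : ℕ) (f1 : FMap G) (σ : G.A) (f2 : FMap G) : Prop :=
  G.ValidF lmax W f2 ∧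
  (∃ o ∈ G.Obs, G.fsupp f2 = G.postSet σ (G.fsupp f1) ∩ o) ∧
  ∀ q ∈ G.fsupp f2, ∀ j, 1 ≤ j → j ≤ lmax →
    succVal lmax W (G.zetaSet f1 σ q j) (G.fval f2 q j)

/-- The initial function `f_I`. -/
noncomputable def fI : FMap G := fun q => if q = G.qI then some (fun _ => 0) else none

/-- The unsafe set 𝒰 ⊆ 𝓕. -/
def FU (lmax W : ℕ) : Set (FMap G) :=
  {f | G.ValidF lmax W f ∧ ∃ q ∈ G.fsupp f, G.fval f q lmax < 0}

/-- The partial order ⪯ on 𝓕. -/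
def Preceq (lmax : ℕ) (f g : FMap G) : Prop :=
  G.fsupp f ⊆ G.fsupp g ∧
  ∀ q ∈ G.fsupp f, ∀ i, 1 ≤ i → i ≤ lmax →
    ∃ j, i ≤ j ∧ j ≤ lmax ∧ G.fval g q j ≤ G.fval f q i

/-- Upward-closedness (within 𝓕) with respect to ⪯. -/
def UpClosed (lmax W : ℕ) (S : Set (FMap G)) : Prop :=
  ∀ f ∈ S, ∀ g ∈ G.Fset lmax W, G.Preceq lmax f g → g ∈ S

/-- Uncontrollable predecessors in the game `G'`. -/
def upreF (lmax W : ℕ) (S : Set (FMap G)) : Set (FMap G) :=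
  {p | G.ValidF lmax W p ∧ ∀ σ : G.A, ∃ f2 ∈ S, G.IsSucc lmax W p σ f2}

/-- The set of ⪯-minimal elements of `T`. -/
def minimal (lmax : ℕ) (T : Set (FMap G)) : Set (FMap G) :=
  {x | x ∈ T ∧ ∀ y ∈ T, G.Preceq lmax y x → y = x}

/-- The antichain version ⌊upre⌋ of the uncontrollable-predecessors operator. -/
def acUpre (lmax W : ℕ) (a : Set (FMap G)) : Set (FMap G) :=
  G.minimal lmax {p | G.ValidF lmax W p ∧ p ∉ G.FU lmax W ∧
    ∀ σ : G.A, ∃ q' ∈ a, ∃ r', G.IsSucc lmax W p σ r' ∧ G.Preceq lmax q' r'}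

/-- Upward closure within 𝓕. -/
def upSet (lmax W : ℕ) (T : Set (FMap G)) : Set (FMap G) :=
  {g | g ∈ G.Fset lmax W ∧ ∃ f ∈ T, G.Preceq lmax f g}

/-- Histories of the perfect-information game `G'`. -/
def histP (fs : ℕ → FMap G) (act : ℕ → G.A) (n : ℕ) : List (FMap G × G.A) :=
  (List.range n).map fun i => (fs i, act i)

/-- The given strategy of Eve is winning for the safety objective of `G'`:
every consistent play (a sequence of σ-successor moves from `f_I`) avoids 𝒰. -/
def WinsSafeP (lmax W : ℕ) (str : List (FMap G × G.A) → FMap G → G.A) : Prop :=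
  ∀ fs : ℕ → FMap G, ∀ act : ℕ → G.A,
    fs 0 = G.fI →
    (∀ i, G.IsSucc lmax W (fs i) (act i) (fs (i + 1))) →
    (∀ n, act n = str (G.histP fs act n) (fs n)) →
    ∀ i, fs i ∉ G.FU lmax W

/-- The monotone map `X ↦ 𝒰 ∪ upre(X)` on the powerset lattice of 𝓕. -/
def safeOp (lmax W : ℕ) : Set (FMap G) →o Set (FMap G) where
  toFun X := G.FU lmax W ∪ G.upreF lmax W X
  monotone' := by
    intro X Y hXY f hf
    rcases hf with hf | hf
    · exact Or.inl hf
    · refine Or.inr ⟨hf.1, fun σ => ?_⟩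
      obtain ⟨f2, hf2, hs⟩ := hf.2 σ
      exact ⟨f2, hXY hf2, hs⟩

end WGA

namespace WGA

private lemma succVal_of_neg {lmax W : ℕ} {Z : Set ℤ} {v : ℤ}
    (h : succVal lmax W Z v) (hv : v < 0) :
    ∃ z, IsLeast Z z ∧ z < 0 ∧ v = max (-((W : ℤ) * (lmax : ℤ))) z := by
  rcases h with ⟨_, hv0⟩ | ⟨z, hz, hv0⟩
  · subst hv0; omega
  · refine ⟨z, hz, ?_, ?_⟩ <;> omega

private lemma sum_lb (G : WGA) (W : ℕ)
    (hW : ∀ p σ q, G.Δ p σ q → |G.w p σ q| ≤ (W : ℤ))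
    (c : ℕ → G.Q) (act : ℕ → G.A) (s j : ℕ)
    (hΔ : ∀ t, t < j → G.Δ (c (s + t)) (act (s + t)) (c (s + t + 1))) :
    -((j : ℤ) * W) ≤ ∑ t ∈ Finset.range j, G.w (c (s + t)) (act (s + t)) (c (s + t + 1)) := by
  calc -((j : ℤ) * W) = ∑ _t ∈ Finset.range j, (-(W : ℤ)) := by
        simp [Finset.sum_const, mul_comm]
    _ ≤ _ := Finset.sum_le_sum fun t ht => by
        have := abs_le.mp (hW _ _ _ (hΔ t (Finset.mem_range.mp ht)))
        omega

private lemma extract (G : WGA) (lmax W : ℕ)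
    (act : ℕ → G.A) (fs : ℕ → FMap G) (n : ℕ)
    (hsucc : ∀ i, i < n → G.IsSucc lmax W (fs i) (act i) (fs (i + 1))) :
    ∀ j, 1 ≤ j → j ≤ lmax → ∀ s, s + j ≤ n → ∀ q, q ∈ G.fsupp (fs (s + j)) →
      G.fval (fs (s + j)) q j < 0 →
      ∃ c : ℕ → G.Q, c (s + j) = q ∧
        (∀ k, s ≤ k → k ≤ s + j → c k ∈ G.fsupp (fs k)) ∧
        (∀ k, s ≤ k → k < s + j → G.Δ (c k) (act k) (c (k + 1))) ∧
        (∀ m, m < j → (∑ t ∈ Finset.range (m + 1),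
            G.w (c (s + t)) (act (s + t)) (c (s + t + 1))) < 0) := by
  intro j hj1
  -- strengthen: also total sum ≤ fval
  have main : ∀ j, 1 ≤ j → j ≤ lmax → ∀ s, s + j ≤ n → ∀ q, q ∈ G.fsupp (fs (s + j)) →
      G.fval (fs (s + j)) q j < 0 →
      ∃ c : ℕ → G.Q, c (s + j) = q ∧
        (∀ k, s ≤ k → k ≤ s + j → c k ∈ G.fsupp (fs k)) ∧
        (∀ k, s ≤ k → k < s + j → G.Δ (c k) (act k) (c (k + 1))) ∧
        (∀ m, m < j → (∑ t ∈ Finset.range (m + 1),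
            G.w (c (s + t)) (act (s + t)) (c (s + t + 1))) < 0) ∧
        (∑ t ∈ Finset.range j, G.w (c (s + t)) (act (s + t)) (c (s + t + 1))) ≤
          G.fval (fs (s + j)) q j := by
    intro j hj1
    induction j, hj1 using Nat.le_induction with
    | base =>
      intro _ s hsn q hq hneg
      have hIS := hsucc s (by omega)
      have hsv := hIS.2.2 q hq 1 le_rfl (by omega)
      obtain ⟨z, hzl, hz0, hval⟩ := succVal_of_neg hsv hneg
      have hzmem := hzl.1
      rw [zetaSet, if_pos rfl] at hzmem
      obtain ⟨p', hp's, hΔ', hzw⟩ := hzmem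
      have hne : s ≠ s + 1 := by omega
      refine ⟨fun k => if k = s + 1 then q else p', by simp, ?_, ?_, ?_, ?_⟩
      · intro k hk1 hk2
        dsimp only
        by_cases h : k = s + 1
        · rw [h, if_pos rfl]; exact hq
        · rw [if_neg h, show k = s by omega]; exact hp's
      · intro k hk1 hk2
        dsimp only
        rw [show k = s by omega, if_neg hne, if_pos rfl]
        exact hΔ'
      · intro m hm
        rw [show m = 0 by omega]
        simp [hne]
        omega
      · simp [hne]
        omega
    | succ j hj ih =>
      intro hjl s hsn q hq hneg
      simp only [← Nat.add_assoc] at hq hneg ⊢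
      have hIS := hsucc (s + j) (by omega)
      have hsv := hIS.2.2 q hq (j + 1) (by omega) hjl
      obtain ⟨z, hzl, hz0, hval⟩ := succVal_of_neg hsv hneg
      have hzmem := hzl.1
      rw [zetaSet, if_neg (by omega)] at hzmem
      obtain ⟨p', hp's, hΔ', hprev, hzw⟩ := hzmem
      rw [show j + 1 - 1 = j from rfl] at hprev hzw
      obtain ⟨c', hc'q, hc'mem, hc'Δ, hc'part, hc'tot⟩ :=
        ih (by omega) s (by omega) p' hp's hprev
      refine ⟨Function.update c' (s + j + 1) q, Function.update_self .., ?_, ?_, ?_, ?_⟩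
      all_goals
        have hupd : ∀ k, k ≤ s + j → Function.update c' (s + j + 1) q k = c' k := by
          intro k hk; exact Function.update_of_ne (by omega) _ _
      · intro k hk1 hk2
        by_cases h : k = s + j + 1
        · rw [h, Function.update_self]; exact hq
        · rw [hupd k (by omega)]; exact hc'mem k hk1 (by omega)
      · intro k hk1 hk2
        by_cases h : k = s + j
        · rw [h, hupd _ le_rfl, Function.update_self, hc'q]
          exact hΔ'
        · rw [hupd k (by omega), hupd (k + 1) (by omega)]
          exact hc'Δ k hk1 (by omega)
      all_goals
        have hsum : ∀ m, m ≤ j →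
            (∑ t ∈ Finset.range m, G.w (Function.update c' (s + j + 1) q (s + t))
              (act (s + t)) (Function.update c' (s + j + 1) q (s + t + 1))) =
            ∑ t ∈ Finset.range m, G.w (c' (s + t)) (act (s + t)) (c' (s + t + 1)) := by
          intro m hm
          refine Finset.sum_congr rfl fun t ht => ?_
          have ht' := Finset.mem_range.mp ht
          rw [hupd (s + t) (by omega), hupd (s + t + 1) (by omega)]
        have hlast : (∑ t ∈ Finset.range (j + 1),
            G.w (Function.update c' (s + j + 1) q (s + t)) (act (s + t))
              (Function.update c' (s + j + 1) q (s + t + 1))) ≤ z := by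
          rw [Finset.sum_range_succ, hsum j le_rfl,
            hupd (s + j) le_rfl, Function.update_self, hc'q, hzw]
          omega
      · intro m hm
        by_cases h : m = j
        · rw [h]; omega
        · rw [hsum (m + 1) (by omega)]
          exact hc'part m (by omega)
      · rw [hval]
        have : z ≤ max (-((W : ℤ) * (lmax : ℤ))) z := le_max_right _ _
        omega
  intro hjlmax s hsn q hq hneg
  obtain ⟨c, h1, h2, h3, h4, _⟩ := main j hj1 hjlmax s hsn q hq hneg
  exact ⟨c, h1, h2, h3, h4⟩

private lemma inject (G : WGA) (lmax W : ℕ) (hlmax : 1 ≤ lmax)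
    (hW : ∀ p σ q, G.Δ p σ q → |G.w p σ q| ≤ (W : ℤ))
    (act : ℕ → G.A) (fs : ℕ → FMap G) (n : ℕ)
    (hsucc : ∀ i, i < n → G.IsSucc lmax W (fs i) (act i) (fs (i + 1)))
    (c : ℕ → G.Q) :
    ∀ j, 1 ≤ j → j ≤ lmax → ∀ s, s + j ≤ n →
      (∀ k, s ≤ k → k ≤ s + j → c k ∈ G.fsupp (fs k)) →
      (∀ k, s ≤ k → k < s + j → G.Δ (c k) (act k) (c (k + 1))) →
      (∀ m, m < j → (∑ t ∈ Finset.range (m + 1),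
          G.w (c (s + t)) (act (s + t)) (c (s + t + 1))) < 0) →
      G.fval (fs (s + j)) (c (s + j)) j ≤
        ∑ t ∈ Finset.range j, G.w (c (s + t)) (act (s + t)) (c (s + t + 1)) := by
  intro j hj1
  induction j, hj1 using Nat.le_induction with
  | base =>
    intro _ s hsn hmem hΔ hpart
    have hIS := hsucc s (by omega)
    have hsv := hIS.2.2 (c (s + 1)) (hmem (s + 1) (by omega) le_rfl) 1 le_rfl (by omega)
    have hΔ0 : G.Δ (c s) (act s) (c (s + 1)) := by simpa using hΔ s le_rfl (by omega)
    have hx : G.w (c s) (act s) (c (s + 1)) ∈ G.zetaSet (fs s) (act s) (c (s + 1)) 1 := by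
      rw [zetaSet, if_pos rfl]
      exact ⟨c s, hmem s le_rfl (by omega), hΔ0, rfl⟩
    rcases hsv with ⟨hZ, _⟩ | ⟨z, hzl, hval⟩
    · rw [hZ] at hx; exact absurd hx (Set.notMem_empty _)
    · have hzle : z ≤ G.w (c s) (act s) (c (s + 1)) := hzl.2 hx
      have hneg : G.w (c s) (act s) (c (s + 1)) < 0 := by
        have h0 := hpart 0 (by omega)
        simp only [Nat.zero_add, Finset.sum_range_one, Nat.add_zero] at h0
        exact h0
      have hbd : -((W : ℤ) * (lmax : ℤ)) ≤ G.w (c s) (act s) (c (s + 1)) := by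
        have := abs_le.mp (hW _ _ _ hΔ0)
        have : -(W : ℤ) ≤ G.w (c s) (act s) (c (s + 1)) := this.1
        nlinarith [this, Int.natCast_nonneg W, (by exact_mod_cast hlmax : (1 : ℤ) ≤ (lmax : ℤ))]
      simp only [Finset.sum_range_one, Nat.add_zero]
      omega
  | succ j hj ih =>
    intro hjl s hsn hmem hΔ hpart
    simp only [← Nat.add_assoc]
    have ihv := ih (by omega) s (by omega)
      (fun k h1 h2 => hmem k h1 (by omega))
      (fun k h1 h2 => hΔ k h1 (by omega))
      (fun m hm => hpart m (by omega))
    have hTj : (∑ t ∈ Finset.range j, G.w (c (s + t)) (act (s + t)) (c (s + t + 1))) < 0 := by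
      have := hpart (j - 1) (by omega)
      rwa [show j - 1 + 1 = j by omega] at this
    have hprev : G.fval (fs (s + j)) (c (s + j)) j < 0 := by omega
    have hIS := hsucc (s + j) (by omega)
    have hsv := hIS.2.2 (c (s + j + 1)) (hmem (s + j + 1) (by omega) le_rfl) (j + 1)
      (by omega) hjl
    have hΔ0 : G.Δ (c (s + j)) (act (s + j)) (c (s + j + 1)) := hΔ (s + j) (by omega) (by omega)
    have hx : G.fval (fs (s + j)) (c (s + j)) j + G.w (c (s + j)) (act (s + j)) (c (s + j + 1))
        ∈ G.zetaSet (fs (s + j)) (act (s + j)) (c (s + j + 1)) (j + 1) := by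
      rw [zetaSet, if_neg (by omega)]
      refine ⟨c (s + j), hmem (s + j) (by omega) (by omega), hΔ0, ?_, ?_⟩
      · rw [show j + 1 - 1 = j from rfl]; exact hprev
      · rw [show j + 1 - 1 = j from rfl]
    rcases hsv with ⟨hZ, _⟩ | ⟨z, hzl, hval⟩
    · rw [hZ] at hx; exact absurd hx (Set.notMem_empty _)
    · have hzle := hzl.2 hx
      have hT1 : (∑ t ∈ Finset.range (j + 1),
          G.w (c (s + t)) (act (s + t)) (c (s + t + 1))) < 0 := hpart j (by omega)
      have hbd : -((W : ℤ) * (lmax : ℤ)) ≤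
          ∑ t ∈ Finset.range (j + 1), G.w (c (s + t)) (act (s + t)) (c (s + t + 1)) := by
        have h1 := G.sum_lb W hW c act s (j + 1) (fun t ht => hΔ (s + t) (by omega) (by omega))
        have h2 : ((j : ℤ) + 1) * W ≤ (lmax : ℤ) * W := by
          have : ((j : ℤ) + 1) ≤ (lmax : ℤ) := by exact_mod_cast hjl
          nlinarith [Int.natCast_nonneg W]
        push_cast at h1 ⊢
        nlinarith [h1, h2]
      rw [Finset.sum_range_succ] at hT1 hbd ⊢
      omega

end WGA

/-- Lemma 4: `f_n(p)_l < 0` iff a window of length `l` is open at `p`. -/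
theorem open_window_iff_fval_neg (G : WGA) (lmax W : ℕ) (hlmax : 1 ≤ lmax)
    (hW : ∀ p σ q, G.Δ p σ q → |G.w p σ q| ≤ (W : ℤ))
    (n : ℕ) (obs : ℕ → Set G.Q) (act : ℕ → G.A)
    (hobs : ∀ i, i ≤ n → obs i ∈ G.Obs)
    (habs : ∃ c : ℕ → G.Q, (∀ i, i ≤ n → c i ∈ obs i) ∧
      ∀ i, i < n → G.Δ (c i) (act i) (c (i + 1)))
    (φ : WGA.FMap G) (hφ : G.ValidF lmax W φ) (hφ0 : G.fsupp φ ⊆ obs 0)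
    (fs : ℕ → WGA.FMap G) (hf0 : fs 0 = φ)
    (hsucc : ∀ i, i < n →
      G.IsSucc lmax W (fs i) (act i) (fs (i + 1)) ∧ G.fsupp (fs (i + 1)) ⊆ obs (i + 1))
    (p : G.Q) (hp : p ∈ G.fsupp (fs n)) (l : ℕ) (hl1 : 1 ≤ l) (hllmax : l ≤ lmax)
    (hln : l ≤ n) :
    G.fval (fs n) p l < 0 ↔
      ∃ c : ℕ → G.Q, (∀ i, i ≤ n → c i ∈ obs i) ∧
        (∀ i, i < n → G.Δ (c i) (act i) (c (i + 1))) ∧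
        c 0 ∈ G.fsupp φ ∧ c n = p ∧
        ∀ m, n - l ≤ m → m < n →
          (∑ j ∈ Finset.Icc (n - l) m, G.w (c j) (act j) (c (j + 1))) < 0 := by

  have hsupp_sub : ∀ i, i ≤ n → G.fsupp (fs i) ⊆ obs i := by
    intro i hi
    cases i with
    | zero => rw [hf0]; exact hφ0
    | succ k => exact (hsucc k (by omega)).2
  have hsupp_ne : ∀ m, m ≤ n → (G.fsupp (fs (n - m))).Nonempty := by
    intro m
    induction m with
    | zero => intro _; exact ⟨p, by simpa using hp⟩
    | succ k ih =>
      intro hk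
      obtain ⟨q, hq⟩ := ih (by omega)
      rcases Nat.eq_zero_or_pos (n - k) with h0 | h0
      · rw [show n - (k+1) = n - k by omega]; exact ⟨q, hq⟩
      · have hIS := (hsucc (n - (k + 1)) (by omega)).1
        obtain ⟨o, ho, hso⟩ := hIS.2.1
        have he : n - (k + 1) + 1 = n - k := by omega
        rw [he] at hso
        rw [hso] at hq
        obtain ⟨p0, hp0, _⟩ := hq.1
        exact ⟨p0, hp0⟩
  have hsupp_eq : ∀ i, i < n →
      G.fsupp (fs (i + 1)) = G.postSet (act i) (G.fsupp (fs i)) ∩ obs (i + 1) := by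
    intro i hi
    obtain ⟨o, ho, hso⟩ := (hsucc i hi).1.2.1
    have hne : (G.fsupp (fs (i + 1))).Nonempty := by
      have := hsupp_ne (n - (i + 1)) (by omega)
      rwa [show n - (n - (i+1)) = i + 1 by omega] at this
    obtain ⟨q, hq⟩ := hne
    have hqo : q ∈ o := by rw [hso] at hq; exact hq.2
    have hqobs : q ∈ obs (i + 1) := hsupp_sub (i + 1) (by omega) hq
    obtain ⟨o', ho', huniq⟩ := G.obs_partition q
    have h1 : o = o' := huniq o ⟨ho, hqo⟩
    have h2 : obs (i + 1) = o' := huniq _ ⟨hobs (i + 1) (by omega), hqobs⟩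
    rw [hso, h1, ← h2]
  have hsl : n - l + l = n := Nat.sub_add_cancel hln
  constructor
  · intro hneg
    obtain ⟨c, hcq, hcmem, hcΔ, hcpart⟩ :=
      G.extract lmax W act fs n (fun i hi => (hsucc i hi).1) l hl1 hllmax (n - l)
        (by omega) p (by rwa [hsl]) (by rwa [hsl])
    rw [hsl] at hcq hcmem hcΔ
    have hext : ∀ m, m ≤ n - l → ∃ d : ℕ → G.Q,
        (∀ k, n - l - m ≤ k → k ≤ n → d k ∈ G.fsupp (fs k)) ∧
        (∀ k, n - l - m ≤ k → k < n → G.Δ (d k) (act k) (d (k + 1))) ∧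
        d n = p ∧
        (∀ m', n - l ≤ m' → m' < n →
          (∑ t ∈ Finset.Icc (n - l) m', G.w (d t) (act t) (d (t + 1))) < 0) := by
      intro m
      induction m with
      | zero =>
        intro _
        refine ⟨c, fun k h1 h2 => hcmem k (by omega) h2, fun k h1 h2 => hcΔ k (by omega) h2,
          hcq, ?_⟩
        intro m' h1 h2
        rw [← Finset.Ico_add_one_right_eq_Icc, Finset.sum_Ico_eq_sum_range]
        rw [show m' + 1 - (n - l) = (m' - (n - l)) + 1 by omega]
        exact hcpart (m' - (n - l)) (by omega)
      | succ k ih =>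
        intro hk
        obtain ⟨d, hdmem, hdΔ, hdn, hdsum⟩ := ih (by omega)
        rcases Nat.eq_zero_or_pos (n - l - k) with h0 | h0
        · exact ⟨d, fun k' h1 h2 => hdmem k' (by omega) h2,
            fun k' h1 h2 => hdΔ k' (by omega) h2, hdn, hdsum⟩
        · set t := n - l - (k + 1) with ht
          have htk : n - l - k = t + 1 := by omega
          have htn : t < n := by omega
          have hd1 : d (t + 1) ∈ G.fsupp (fs (t + 1)) := hdmem (t + 1) (by omega) (by omega)
          rw [hsupp_eq t htn] at hd1
          obtain ⟨p0, hp0, hΔ0⟩ := hd1.1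
          refine ⟨Function.update d t p0, ?_, ?_, ?_, ?_⟩
          · intro k' h1 h2
            rcases Nat.eq_or_lt_of_le h1 with h | h
            · rw [← h, Function.update_self]; exact hp0
            · rw [Function.update_of_ne (by omega)]; exact hdmem k' (by omega) h2
          · intro k' h1 h2
            rcases Nat.eq_or_lt_of_le h1 with h | h
            · rw [← h, Function.update_self, Function.update_of_ne (by omega)]
              exact hΔ0
            · rw [Function.update_of_ne (by omega), Function.update_of_ne (by omega)]
              exact hdΔ k' (by omega) h2
          · rw [Function.update_of_ne (by omega)]; exact hdn
          · intro m' h1 h2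
            have heq : (∑ t' ∈ Finset.Icc (n - l) m',
                G.w (Function.update d t p0 t') (act t') (Function.update d t p0 (t' + 1))) =
                ∑ t' ∈ Finset.Icc (n - l) m', G.w (d t') (act t') (d (t' + 1)) := by
              refine Finset.sum_congr rfl fun x hx => ?_
              have hx' := Finset.mem_Icc.mp hx
              rw [Function.update_of_ne (by omega), Function.update_of_ne (by omega)]
            rw [heq]
            exact hdsum m' h1 h2
    obtain ⟨d, hdmem, hdΔ, hdn, hdsum⟩ := hext (n - l) le_rfl
    simp only [Nat.sub_self] at hdmem hdΔ
    exact ⟨d, fun i hi => hsupp_sub i hi (hdmem i (by omega) hi),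
      fun i hi => hdΔ i (by omega) hi,
      by have := hdmem 0 (by omega) (by omega); rwa [hf0] at this,
      hdn, hdsum⟩
  · rintro ⟨c, hcobs, hcΔ, hc0, hcn, hcsum⟩
    have hmem : ∀ k, k ≤ n → c k ∈ G.fsupp (fs k) := by
      intro k
      induction k with
      | zero => intro _; rw [hf0]; exact hc0
      | succ k ih =>
        intro hk
        rw [hsupp_eq k (by omega)]
        exact ⟨⟨c k, ih (by omega), hcΔ k (by omega)⟩, hcobs (k + 1) hk⟩
    have hpart : ∀ m, m < l → (∑ t ∈ Finset.range (m + 1),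
        G.w (c (n - l + t)) (act (n - l + t)) (c (n - l + t + 1))) < 0 := by
      intro m hm
      have hs := hcsum (n - l + m) (by omega) (by omega)
      rw [← Finset.Ico_add_one_right_eq_Icc, Finset.sum_Ico_eq_sum_range] at hs
      rwa [show n - l + m + 1 - (n - l) = m + 1 by omega] at hs
    have hinj := G.inject lmax W hlmax hW act fs n (fun i hi => (hsucc i hi).1) c l hl1 hllmax
      (n - l) (by omega) (fun k h1 h2 => hmem k (by omega))
      (fun k h1 h2 => hcΔ k (by omega)) hpart
    rw [hsl, hcn] at hinj
    have hTl := hpart (l - 1) (by omega)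
    rw [show l - 1 + 1 = l by omega] at hTl
    omega
end

section
/- Let ρ = o_0σ_0o_1…o_n be an abstract path of a WGA G, let lmax ≥ 1, let φ ∈ 𝓕 with supp(φ) ⊆ o_0, and let supp⁻¹(ρ,φ) = f_0σ_0f_1…f_n. Let p ∈ supp(f_n), 1 ≤ l ≤ lmax with l ≤ n, and set λ = n − l. Then the following three statements are equivalent: (C1) there is a concrete path q_0σ_0…q_n with q_i ∈ o_i for all i, q_n = p and q_0 ∈ supp(φ), such that Σ_{j=n−l}^{m} w(q_j,σ_j,q_{j+1}) < 0 for all m with n−l ≤ m < n; (C2) f_n(p)_l < 0; (C3) there is a concrete path q_0σ_0…q_n with q_i ∈ o_i for all i, q_n = p and q_0 ∈ supp(φ), such that (a) f_j(q_j)_{j−λ} < 0 for all λ < j ≤ n, and (b) f_k(q_k)_{k−λ} + w(q_k,σ_k,q_{k+1}) = f_{k+1}(q_{k+1})_{k−λ+1} for all λ < k < n. -/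
open scoped Classical

/-- Lemma 8, appendix: equivalence of the three conditions C1, C2, C3,
where `λ = n − l`. -/
theorem magic_lemma (G : WGA) (lmax W : ℕ) (hlmax : 1 ≤ lmax)
    (hW : ∀ p σ q, G.Δ p σ q → |G.w p σ q| ≤ (W : ℤ))
    (n : ℕ) (obs : ℕ → Set G.Q) (act : ℕ → G.A)
    (hobs : ∀ i, i ≤ n → obs i ∈ G.Obs)
    (habs : ∃ c : ℕ → G.Q, (∀ i, i ≤ n → c i ∈ obs i) ∧
      ∀ i, i < n → G.Δ (c i) (act i) (c (i + 1)))
    (φ : WGA.FMap G) (hφ : G.ValidF lmax W φ) (hφ0 : G.fsupp φ ⊆ obs 0)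
    (fs : ℕ → WGA.FMap G) (hf0 : fs 0 = φ)
    (hsucc : ∀ i, i < n →
      G.IsSucc lmax W (fs i) (act i) (fs (i + 1)) ∧ G.fsupp (fs (i + 1)) ⊆ obs (i + 1))
    (p : G.Q) (hp : p ∈ G.fsupp (fs n)) (l : ℕ) (hl1 : 1 ≤ l) (hllmax : l ≤ lmax)
    (hln : l ≤ n) :
    -- C1 ↔ C2
    ((∃ c : ℕ → G.Q, (∀ i, i ≤ n → c i ∈ obs i) ∧
        (∀ i, i < n → G.Δ (c i) (act i) (c (i + 1))) ∧
        c 0 ∈ G.fsupp φ ∧ c n = p ∧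
        ∀ m, n - l ≤ m → m < n →
          (∑ j ∈ Finset.Icc (n - l) m, G.w (c j) (act j) (c (j + 1))) < 0) ↔
      G.fval (fs n) p l < 0) ∧
    -- C2 ↔ C3
    (G.fval (fs n) p l < 0 ↔
      ∃ c : ℕ → G.Q, (∀ i, i ≤ n → c i ∈ obs i) ∧
        (∀ i, i < n → G.Δ (c i) (act i) (c (i + 1))) ∧
        c 0 ∈ G.fsupp φ ∧ c n = p ∧
        (∀ j, n - l < j → j ≤ n → G.fval (fs j) (c j) (j - (n - l)) < 0) ∧
        (∀ k, n - l < k → k < n →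
          G.fval (fs k) (c k) (k - (n - l)) + G.w (c k) (act k) (c (k + 1)) =
            G.fval (fs (k + 1)) (c (k + 1)) (k - (n - l) + 1))) := by
  classical
  set lam := n - l with hlamdef
  have hlaml : lam + l = n := Nat.sub_add_cancel hln
  have hWnn : (0:ℤ) ≤ (W:ℤ) * (lmax:ℤ) := by positivity
  have hWW : (W:ℤ) ≤ (W:ℤ) * (lmax:ℤ) :=
    le_mul_of_one_le_right (Int.ofNat_nonneg W) (by exact_mod_cast hlmax)
  have hmax0 : max (-((W:ℤ) * (lmax:ℤ))) 0 = 0 := max_eq_right (neg_nonpos.mpr hWnn)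
  have hwlb : ∀ p' σ q, G.Δ p' σ q → -(W:ℤ) ≤ G.w p' σ q :=
    fun p' σ q h => (abs_le.mp (hW p' σ q h)).1
  have zeta_one : ∀ f σ q, G.zetaSet f σ q 1 =
      {x | ∃ p' ∈ G.fsupp f, G.Δ p' σ q ∧ x = G.w p' σ q} := by
    intro f σ q; simp [WGA.zetaSet]
  have zeta_succ : ∀ (f : WGA.FMap G) σ q j, j ≠ 1 → G.zetaSet f σ q j =
      {x | ∃ p' ∈ G.fsupp f, G.Δ p' σ q ∧ G.fval f p' (j-1) < 0 ∧
        x = G.fval f p' (j-1) + G.w p' σ q} := by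
    intro f σ q j hj; simp [WGA.zetaSet, hj]
  -- nonemptiness of supports
  have hneAux : ∀ i, (G.fsupp (fs (n - i))).Nonempty := by
    intro i
    induction i with
    | zero => exact ⟨p, hp⟩
    | succ i ih =>
      by_cases h : i < n
      · have hk : n - i = (n - (i+1)) + 1 := by omega
        obtain ⟨q, hq⟩ := ih
        rw [hk] at hq
        obtain ⟨o, ho, hoeq⟩ := (hsucc (n - (i+1)) (by omega)).1.2.1
        rw [hoeq] at hq
        obtain ⟨hq1, hq2⟩ := hq
        obtain ⟨p', hp', hΔ⟩ := hq1
        exact ⟨p', hp'⟩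
      · have : n - (i+1) = n - i := by omega
        rw [this]; exact ih
  have hneK : ∀ k, k ≤ n → (G.fsupp (fs k)).Nonempty := by
    intro k hk
    have := hneAux (n - k)
    rwa [Nat.sub_sub_self hk] at this
  -- supports are contained in observations
  have hso : ∀ k, k ≤ n → G.fsupp (fs k) ⊆ obs k := by
    intro k hk
    cases k with
    | zero => rw [hf0]; exact hφ0
    | succ k => exact (hsucc k (by omega)).2
  -- support equality
  have hsupp_eq : ∀ k, k < n →
      G.fsupp (fs (k+1)) = G.postSet (act k) (G.fsupp (fs k)) ∩ obs (k+1) := by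
    intro k hk
    obtain ⟨o, ho, hoeq⟩ := (hsucc k hk).1.2.1
    obtain ⟨q, hq⟩ := hneK (k+1) (by omega)
    have hqo : q ∈ o := by
      rw [hoeq] at hq; exact hq.2
    have hqobs : q ∈ obs (k+1) := hso (k+1) (by omega) hq
    obtain ⟨o', ho'⟩ := G.obs_partition q
    have h1 : o = obs (k+1) := by
      have e1 := ho'.2 o ⟨ho, hqo⟩
      have e2 := ho'.2 (obs (k+1)) ⟨hobs (k+1) (by omega), hqobs⟩
      rw [e1, e2]
    rw [hoeq, h1]
  -- every state with c 0 ∈ supp φ, obs-compatible, stays in the supports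
  have hcmem : ∀ c : ℕ → G.Q, (∀ i, i ≤ n → c i ∈ obs i) →
      (∀ i, i < n → G.Δ (c i) (act i) (c (i+1))) → c 0 ∈ G.fsupp φ →
      ∀ k, k ≤ n → c k ∈ G.fsupp (fs k) := by
    intro c hcobs hcΔ hc0 k
    induction k with
    | zero => intro _; rw [hf0]; exact hc0
    | succ k ih =>
      intro hk
      rw [hsupp_eq k (by omega)]
      exact ⟨⟨c k, ih (by omega), hcΔ k (by omega)⟩, hcobs (k+1) hk⟩
  -- backward extension of a support state to position 0
  have hext : ∀ k, k ≤ n → ∀ q ∈ G.fsupp (fs k), ∃ e : ℕ → G.Q, e k = q ∧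
      (∀ m, m ≤ k → e m ∈ G.fsupp (fs m)) ∧ ∀ m, m < k → G.Δ (e m) (act m) (e (m+1)) := by
    intro k
    induction k with
    | zero =>
      intro _ q hq
      refine ⟨fun _ => q, rfl, ?_, ?_⟩
      · intro m hm
        have : m = 0 := by omega
        subst this; exact hq
      · intro m hm; omega
    | succ k ih =>
      intro hk q hq
      have hpost : q ∈ G.postSet (act k) (G.fsupp (fs k)) := by
        rw [hsupp_eq k (by omega)] at hq; exact hq.1
      obtain ⟨p', hp', hΔ⟩ := hpost
      obtain ⟨e, he1, he2, he3⟩ := ih (by omega) p' hp'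
      obtain ⟨E, hEtop, hElow⟩ : ∃ E : ℕ → G.Q, E (k+1) = q ∧ ∀ m, m ≤ k → E m = e m :=
        ⟨fun m => if m = k+1 then q else e m, if_pos rfl, fun m hm => if_neg (by omega)⟩
      refine ⟨E, hEtop, ?_, ?_⟩
      · intro m hm
        by_cases h : m = k + 1
        · subst h; rw [hEtop]; exact hq
        · rw [hElow m (by omega)]; exact he2 m (by omega)
      · intro m hm
        by_cases h : m = k
        · subst h
          rw [hElow m le_rfl, hEtop, he1]
          exact hΔ
        · rw [hElow m (by omega), hElow (m+1) (by omega)]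
          exact he3 m (by omega)
  -- step lemma from IsSucc
  have hstep : ∀ k, lam ≤ k → k < n → ∀ q ∈ G.fsupp (fs (k+1)),
      WGA.succVal lmax W (G.zetaSet (fs k) (act k) q (k - lam + 1))
        (G.fval (fs (k+1)) q (k - lam + 1)) := by
    intro k hk1 hk2 q hq
    exact (hsucc k hk2).1.2.2 q hq (k - lam + 1) (by omega) (by omega)
  -- lower bound on sums of weights along transitions
  have hsum_lb : ∀ (e : ℕ → G.Q) (a b : ℕ),
      (∀ i, a ≤ i → i ≤ b → G.Δ (e i) (act i) (e (i+1))) →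
      -((W:ℤ) * ((Finset.Icc a b).card : ℤ)) ≤
        ∑ i ∈ Finset.Icc a b, G.w (e i) (act i) (e (i+1)) := by
    intro e a b hΔ
    have h1 : ∀ i ∈ Finset.Icc a b, -(W:ℤ) ≤ G.w (e i) (act i) (e (i+1)) := by
      intro i hi
      rw [Finset.mem_Icc] at hi
      exact hwlb _ _ _ (hΔ i hi.1 hi.2)
    have h2 := Finset.card_nsmul_le_sum (Finset.Icc a b) _ (-(W:ℤ)) h1
    rw [nsmul_eq_mul] at h2
    calc -((W:ℤ) * ((Finset.Icc a b).card : ℤ))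
        = ((Finset.Icc a b).card : ℤ) * (-(W:ℤ)) := by ring
      _ ≤ _ := h2
  -- THE BACKWARD CONSTRUCTION (from C2 to witnesses)
  have hback : ∀ j, 1 ≤ j → j ≤ l → ∀ q ∈ G.fsupp (fs (lam + j)),
      G.fval (fs (lam + j)) q j < 0 →
      ∃ d : ℕ → G.Q, d (lam + j) = q ∧
        (∀ m, lam ≤ m → m ≤ lam + j → d m ∈ G.fsupp (fs m)) ∧
        (∀ m, lam ≤ m → m < lam + j → G.Δ (d m) (act m) (d (m + 1))) ∧
        (∀ m, lam < m → m ≤ lam + j → G.fval (fs m) (d m) (m - lam) < 0) ∧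
        (∀ m, lam < m → m < lam + j →
          G.fval (fs m) (d m) (m - lam) + G.w (d m) (act m) (d (m + 1)) =
            G.fval (fs (m + 1)) (d (m + 1)) (m - lam + 1)) ∧
        (∀ m, lam ≤ m → m < lam + j →
          (∑ i ∈ Finset.Icc lam m, G.w (d i) (act i) (d (i + 1))) =
            G.fval (fs (m + 1)) (d (m + 1)) (m + 1 - lam)) := by
    intro j h1
    induction j, h1 using Nat.le_induction with
    | base =>
      intro hjl q hq hneg
      have hs := hstep lam le_rfl (by omega) q hq
      rw [show lam - lam + 1 = 1 from by omega] at hs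
      simp only [WGA.succVal] at hs
      rcases hs with ⟨hZ, hv⟩ | ⟨z, ⟨hzmem, hzlb⟩, hv⟩
      · rw [hv, hmax0] at hneg; exact absurd hneg (lt_irrefl 0)
      · have hzneg : z < 0 := by
          by_contra hc; push_neg at hc
          rw [hv, min_eq_left hc, hmax0] at hneg
          exact lt_irrefl 0 hneg
        rw [zeta_one] at hzmem
        obtain ⟨p', hp', hΔ, hzeq⟩ := hzmem
        have hwb := hwlb _ _ _ hΔ
        have hzW : -((W:ℤ)*(lmax:ℤ)) ≤ z := by rw [hzeq]; linarith
        have hvz : G.fval (fs (lam+1)) q 1 = z := by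
          rw [hv, min_eq_right hzneg.le, max_eq_right hzW]
        obtain ⟨D, hDtop, hDlow⟩ : ∃ D : ℕ → G.Q, D (lam+1) = q ∧ D lam = p' :=
          ⟨fun m => if m = lam + 1 then q else p', if_pos rfl, if_neg (by omega)⟩
        refine ⟨D, hDtop, ?_, ?_, ?_, ?_, ?_⟩
        · intro m hm1 hm2
          by_cases h : m = lam + 1
          · subst h; rw [hDtop]; exact hq
          · have hm : m = lam := by omega
            subst hm; rw [hDlow]; exact hp'
        · intro m hm1 hm2
          have hm : m = lam := by omega
          subst hm
          rw [hDlow, hDtop]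
          exact hΔ
        · intro m hm1 hm2
          have hm : m = lam + 1 := by omega
          subst hm
          rw [hDtop, show lam + 1 - lam = 1 from by omega]
          exact hneg
        · intro m hm1 hm2; omega
        · intro m hm1 hm2
          have hm : m = lam := by omega
          subst hm
          rw [Finset.Icc_self, Finset.sum_singleton, hDlow, hDtop,
            show lam + 1 - lam = 1 from by omega, hvz]
          exact hzeq.symm
    | succ j hj ih =>
      intro hjl q hq hneg
      rw [show lam + (j+1) = lam + j + 1 from by omega] at hq hneg ⊢
      have hs := hstep (lam + j) (by omega) (by omega) q hq
      rw [show lam + j - lam + 1 = j + 1 from by omega] at hs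
      simp only [WGA.succVal] at hs
      rcases hs with ⟨hZ, hv⟩ | ⟨z, ⟨hzmem, hzlb⟩, hv⟩
      · rw [hv, hmax0] at hneg; exact absurd hneg (lt_irrefl 0)
      · have hzneg : z < 0 := by
          by_contra hc; push_neg at hc
          rw [hv, min_eq_left hc, hmax0] at hneg
          exact lt_irrefl 0 hneg
        rw [zeta_succ _ _ _ _ (by omega : j + 1 ≠ 1)] at hzmem
        simp only [Nat.add_sub_cancel] at hzmem
        obtain ⟨p', hp', hΔ, hpneg, hzeq⟩ := hzmem
        obtain ⟨d, hd1, hd2, hd3, hd4, hd5, hd6⟩ := ih (by omega) p' hp' hpneg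
        -- the value at p' equals the sum of the d-weights from lam
        have hd6' := hd6 (lam + j - 1) (by omega) (by omega)
        rw [show lam + j - 1 + 1 = lam + j from by omega] at hd6'
        rw [show lam + j - lam = j from by omega, hd1] at hd6'
        -- lower bound on z
        have hcard : ((Finset.Icc lam (lam + j - 1)).card : ℤ) = (j : ℤ) := by
          rw [Nat.card_Icc]
          have : lam + j - 1 + 1 - lam = j := by omega
          rw [this]
        have hslb := hsum_lb d lam (lam + j - 1) (fun i hi1 hi2 => hd3 i hi1 (by omega))
        rw [hcard] at hslb
        have hwb := hwlb _ _ _ hΔ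
        have hWj : (W:ℤ) * ((j:ℤ) + 1) ≤ (W:ℤ) * (lmax:ℤ) := by
          have hcast : ((j:ℤ) + 1) ≤ (lmax:ℤ) := by exact_mod_cast (by omega : j + 1 ≤ lmax)
          exact mul_le_mul_of_nonneg_left hcast (Int.ofNat_nonneg W)
        have hzW : -((W:ℤ)*(lmax:ℤ)) ≤ z := by
          rw [hzeq, ← hd6']
          nlinarith [hslb, hwb, hWj]
        have hvz : G.fval (fs (lam+j+1)) q (j+1) = z := by
          rw [hv, min_eq_right hzneg.le, max_eq_right hzW]
        obtain ⟨D, hDtop, hDlow⟩ : ∃ D : ℕ → G.Q, D (lam+j+1) = q ∧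
            ∀ m, m ≤ lam + j → D m = d m :=
          ⟨fun m => if m = lam + j + 1 then q else d m, if_pos rfl,
            fun m hm => if_neg (by omega)⟩
        refine ⟨D, hDtop, ?_, ?_, ?_, ?_, ?_⟩
        · intro m hm1 hm2
          by_cases h : m = lam + j + 1
          · subst h; rw [hDtop]; exact hq
          · rw [hDlow m (by omega)]; exact hd2 m hm1 (by omega)
        · intro m hm1 hm2
          by_cases h : m = lam + j
          · subst h
            rw [hDlow _ le_rfl, hDtop, hd1]
            exact hΔ
          · rw [hDlow m (by omega), hDlow (m+1) (by omega)]
            exact hd3 m hm1 (by omega)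
        · intro m hm1 hm2
          by_cases h : m = lam + j + 1
          · subst h
            rw [hDtop, show lam + j + 1 - lam = j + 1 from by omega]
            exact hneg
          · rw [hDlow m (by omega)]; exact hd4 m hm1 (by omega)
        · intro m hm1 hm2
          by_cases h : m = lam + j
          · subst h
            rw [hDlow _ le_rfl, hDtop, hd1, show lam + j - lam = j from by omega, hvz]
            exact hzeq.symm
          · rw [hDlow m (by omega), hDlow (m+1) (by omega)]
            exact hd5 m hm1 (by omega)
        · intro m hm1 hm2
          by_cases h : m = lam + j
          · subst h
            have hs1 := Finset.sum_Icc_succ_top (a := lam) (b := lam + j - 1)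
              (f := fun i => G.w (D i) (act i) (D (i+1))) (by omega)
            rw [show lam + j - 1 + 1 = lam + j from by omega] at hs1
            rw [hs1, hDtop]
            have hcongr : (∑ i ∈ Finset.Icc lam (lam + j - 1), G.w (D i) (act i) (D (i+1))) =
                ∑ i ∈ Finset.Icc lam (lam + j - 1), G.w (d i) (act i) (d (i+1)) := by
              refine Finset.sum_congr rfl ?_
              intro i hi
              rw [Finset.mem_Icc] at hi
              rw [hDlow i (by omega), hDlow (i+1) (by omega)]
            rw [hcongr, hd6', hDlow _ le_rfl, hd1,
              show lam + j + 1 - lam = j + 1 from by omega, hvz]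
            exact hzeq.symm
          · have hcongr : (∑ i ∈ Finset.Icc lam m, G.w (D i) (act i) (D (i+1))) =
                ∑ i ∈ Finset.Icc lam m, G.w (d i) (act i) (d (i+1)) := by
              refine Finset.sum_congr rfl ?_
              intro i hi
              rw [Finset.mem_Icc] at hi
              rw [hDlow i (by omega), hDlow (i+1) (by omega)]
            rw [hcongr, hDlow (m+1) (by omega)]
            exact hd6 m hm1 (by omega)
  -- FROM C2, PRODUCE A FULL WITNESS (for both C1 and C3)
  have hC2wit : G.fval (fs n) p l < 0 →
      ∃ c : ℕ → G.Q, (∀ i, i ≤ n → c i ∈ obs i) ∧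
        (∀ i, i < n → G.Δ (c i) (act i) (c (i+1))) ∧
        c 0 ∈ G.fsupp φ ∧ c n = p ∧
        (∀ m, lam ≤ m → m < n →
          (∑ i ∈ Finset.Icc lam m, G.w (c i) (act i) (c (i+1))) < 0) ∧
        (∀ j, lam < j → j ≤ n → G.fval (fs j) (c j) (j - lam) < 0) ∧
        (∀ k, lam < k → k < n →
          G.fval (fs k) (c k) (k - lam) + G.w (c k) (act k) (c (k+1)) =
            G.fval (fs (k+1)) (c (k+1)) (k - lam + 1)) := by
    intro hneg
    obtain ⟨d, hd1, hd2, hd3, hd4, hd5, hd6⟩ :=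
      hback l hl1 le_rfl p (by rw [hlaml]; exact hp) (by rw [hlaml]; exact hneg)
    obtain ⟨e, he1, he2, he3⟩ := hext lam (by omega) (d lam) (hd2 lam le_rfl (by omega))
    obtain ⟨c, hch, hcl⟩ : ∃ c : ℕ → G.Q, (∀ m, lam ≤ m → c m = d m) ∧
        (∀ m, m ≤ lam → c m = e m) := by
      refine ⟨fun m => if m < lam then e m else d m, fun m hm => if_neg (by omega), ?_⟩
      intro m hm
      by_cases h : m < lam
      · exact if_pos h
      · have : m = lam := by omega
        subst this
        show (if lam < lam then e lam else d lam) = e lam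
        rw [if_neg (lt_irrefl lam)]
        exact he1.symm
    have hcsupp : ∀ k, k ≤ n → c k ∈ G.fsupp (fs k) := by
      intro k hk
      by_cases h : k ≤ lam
      · rw [hcl k h]; exact he2 k h
      · rw [hch k (by omega)]; exact hd2 k (by omega) (by omega)
    refine ⟨c, ?_, ?_, ?_, ?_, ?_, ?_, ?_⟩
    · intro i hi; exact hso i hi (hcsupp i hi)
    · intro i hi
      by_cases h : i + 1 ≤ lam
      · rw [hcl i (by omega), hcl (i+1) h]
        exact he3 i (by omega)
      · rw [hch i (by omega), hch (i+1) (by omega)]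
        exact hd3 i (by omega) (by omega)
    · have h0 : c 0 ∈ G.fsupp (fs 0) := hcsupp 0 (by omega)
      rwa [hf0] at h0
    · rw [hch n (by omega)]
      rw [← hlaml]
      exact hd1
    · intro m hm1 hm2
      have hcongr : (∑ i ∈ Finset.Icc lam m, G.w (c i) (act i) (c (i+1))) =
          ∑ i ∈ Finset.Icc lam m, G.w (d i) (act i) (d (i+1)) := by
        refine Finset.sum_congr rfl ?_
        intro i hi
        rw [Finset.mem_Icc] at hi
        rw [hch i hi.1, hch (i+1) (by omega)]
      rw [hcongr, hd6 m hm1 (by omega)]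
      exact hd4 (m+1) (by omega) (by omega)
    · intro j hj1 hj2
      rw [hch j (by omega)]
      exact hd4 j hj1 (by omega)
    · intro k hk1 hk2
      rw [hch k (by omega), hch (k+1) (by omega)]
      exact hd5 k hk1 (by omega)
  -- FORWARD: C1 implies C2
  have hC1C2 : (∃ c : ℕ → G.Q, (∀ i, i ≤ n → c i ∈ obs i) ∧
        (∀ i, i < n → G.Δ (c i) (act i) (c (i + 1))) ∧
        c 0 ∈ G.fsupp φ ∧ c n = p ∧
        ∀ m, lam ≤ m → m < n →
          (∑ j ∈ Finset.Icc lam m, G.w (c j) (act j) (c (j + 1))) < 0) →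
      G.fval (fs n) p l < 0 := by
    rintro ⟨c, hcobs, hcΔ, hc0, hcn, hcsum⟩
    have hmem := hcmem c hcobs hcΔ hc0
    have hfwd : ∀ j, 1 ≤ j → j ≤ l →
        G.fval (fs (lam + j)) (c (lam + j)) j ≤
          ∑ i ∈ Finset.Icc lam (lam + j - 1), G.w (c i) (act i) (c (i + 1)) := by
      intro j h1
      induction j, h1 using Nat.le_induction with
      | base =>
        intro hjl
        have hs := hstep lam le_rfl (by omega) (c (lam+1)) (hmem (lam+1) (by omega))
        rw [show lam - lam + 1 = 1 from by omega] at hs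
        simp only [WGA.succVal] at hs
        have hzmem : G.w (c lam) (act lam) (c (lam+1)) ∈
            G.zetaSet (fs lam) (act lam) (c (lam+1)) 1 := by
          rw [zeta_one]
          exact ⟨c lam, hmem lam (by omega), hcΔ lam (by omega), rfl⟩
        have hwb := hwlb _ _ _ (hcΔ lam (by omega))
        rcases hs with ⟨hZ, hv⟩ | ⟨z, ⟨hzmem', hzlb⟩, hv⟩
        · rw [hZ] at hzmem; exact absurd hzmem (Set.notMem_empty _)
        · rw [show lam + 1 - 1 = lam from by omega, Finset.Icc_self, Finset.sum_singleton, hv]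
          refine max_le (by linarith) ?_
          exact le_trans (min_le_right 0 z) (hzlb hzmem)
      | succ j hj ihj =>
        intro hjl
        rw [show lam + (j+1) = lam + j + 1 from by omega,
          show lam + j + 1 - 1 = lam + j from by omega]
        have hSneg : (∑ i ∈ Finset.Icc lam (lam + j - 1), G.w (c i) (act i) (c (i+1))) < 0 :=
          hcsum (lam + j - 1) (by omega) (by omega)
        have hneg' : G.fval (fs (lam + j)) (c (lam + j)) j < 0 :=
          lt_of_le_of_lt (ihj (by omega)) hSneg
        have hs := hstep (lam + j) (by omega) (by omega) (c (lam + j + 1))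
          (hmem (lam + j + 1) (by omega))
        rw [show lam + j - lam + 1 = j + 1 from by omega] at hs
        simp only [WGA.succVal] at hs
        have hzmem : G.fval (fs (lam+j)) (c (lam+j)) j +
            G.w (c (lam+j)) (act (lam+j)) (c (lam+j+1)) ∈
            G.zetaSet (fs (lam+j)) (act (lam+j)) (c (lam+j+1)) (j+1) := by
          rw [zeta_succ _ _ _ _ (by omega : j + 1 ≠ 1)]
          simp only [Nat.add_sub_cancel]
          exact ⟨c (lam+j), hmem (lam+j) (by omega), hcΔ (lam+j) (by omega), hneg', rfl⟩
        rcases hs with ⟨hZ, hv⟩ | ⟨z, ⟨hzmem', hzlb⟩, hv⟩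
        · rw [hZ] at hzmem; exact absurd hzmem (Set.notMem_empty _)
        · have hs1 := Finset.sum_Icc_succ_top (a := lam) (b := lam + j - 1)
            (f := fun i => G.w (c i) (act i) (c (i+1))) (by omega)
          rw [show lam + j - 1 + 1 = lam + j from by omega] at hs1
          rw [hs1, hv]
          have hwb := hwlb _ _ _ (hcΔ (lam+j) (by omega))
          have hzle := hzlb hzmem
          refine max_le ?_ ?_
          · -- -(W*lmax) ≤ sum of j+1 weights
            have hcard : ((Finset.Icc lam (lam + j - 1)).card : ℤ) = (j : ℤ) := by
              rw [Nat.card_Icc]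
              have : lam + j - 1 + 1 - lam = j := by omega
              rw [this]
            have hslb := hsum_lb c lam (lam + j - 1) (fun i hi1 hi2 => hcΔ i (by omega))
            rw [hcard] at hslb
            have hWj : (W:ℤ) * ((j:ℤ) + 1) ≤ (W:ℤ) * (lmax:ℤ) := by
              have hcast : ((j:ℤ) + 1) ≤ (lmax:ℤ) := by
                exact_mod_cast (by omega : j + 1 ≤ lmax)
              exact mul_le_mul_of_nonneg_left hcast (Int.ofNat_nonneg W)
            nlinarith [hslb, hwb, hWj]
          · have hS1 := ihj (by omega)
            calc min 0 z ≤ z := min_le_right 0 z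
              _ ≤ G.fval (fs (lam+j)) (c (lam+j)) j +
                  G.w (c (lam+j)) (act (lam+j)) (c (lam+j+1)) := hzle
              _ ≤ _ := by linarith
    have hfl := hfwd l hl1 le_rfl
    rw [hlaml, hcn] at hfl
    have hlast := hcsum (n - 1) (by omega) (by omega)
    exact lt_of_le_of_lt hfl hlast
  constructor
  · constructor
    · exact hC1C2
    · intro hneg
      obtain ⟨c, h1, h2, h3, h4, h5, _, _⟩ := hC2wit hneg
      exact ⟨c, h1, h2, h3, h4, h5⟩
  · constructor
    · intro hneg
      obtain ⟨c, h1, h2, h3, h4, _, h6, h7⟩ := hC2wit hneg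
      exact ⟨c, h1, h2, h3, h4, h6, h7⟩
    · rintro ⟨c, hcobs, hcΔ, hc0, hcn, ha, hb⟩
      have := ha n (by omega) le_rfl
      rw [hcn, show n - lam = l from by omega] at this
      exact this
end

section
/- Let G be a WGA with {q_I} ∈ Obs and let lmax ≥ 1. If Eve wins the safety objective in the perfect-information game G' (never visiting 𝒰), then she also wins the DirFix(0,lmax) objective in G. Explicitly: if λ' is a winning strategy for Eve in G', then the strategy λ defined on play prefixes ρ of G by λ(ρ) = λ'(supp⁻¹(ρ, f_I)) is winning for Eve for DirFix(0,lmax) in G. -/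
open scoped Classical

namespace WGA

variable (G : WGA)

lemma exists_isLeast_of_finite {Z : Set ℤ} (hfin : Z.Finite) (hne : Z.Nonempty) :
    ∃ z, IsLeast Z z := by
  obtain ⟨z, hzZ, hz⟩ := Set.exists_min_image Z id hfin hne
  exact ⟨z, hzZ, fun y hy => hz y hy⟩

noncomputable def zminAux (Z : Set ℤ) : ℤ :=
  if h : ∃ z, IsLeast Z z then h.choose else 0

lemma zminAux_isLeast {Z : Set ℤ} (h : ∃ z, IsLeast Z z) : IsLeast Z (zminAux Z) := by
  rw [zminAux, dif_pos h]; exact h.choose_spec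

lemma zetaSet_finite (f1 : FMap G) (σ : G.A) (q : G.Q) (j : ℕ) :
    (G.zetaSet f1 σ q j).Finite := by
  have h1 : G.zetaSet f1 σ q j ⊆
      ((fun p => G.w p σ q) '' Set.univ) ∪
      ((fun p => G.fval f1 p (j - 1) + G.w p σ q) '' Set.univ) := by
    unfold zetaSet
    split
    · rintro x ⟨p, _, _, rfl⟩; exact Or.inl ⟨p, trivial, rfl⟩
    · rintro x ⟨p, _, _, _, rfl⟩; exact Or.inr ⟨p, trivial, rfl⟩
  exact ((Set.finite_univ.image _).union (Set.finite_univ.image _)).subset h1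

lemma neg_Wlmax_nonpos (lmax W : ℕ) : -((W : ℤ) * (lmax : ℤ)) ≤ 0 :=
  neg_nonpos.mpr (by positivity)

/-- A canonical σ-successor of `f1` with observation `o`. -/
noncomputable def succF (lmax W : ℕ) (f1 : FMap G) (σ : G.A) (o : Set G.Q) : FMap G :=
  fun q => if q ∈ G.postSet σ (G.fsupp f1) ∩ o then
    some (fun j => if 1 ≤ j ∧ j ≤ lmax then
      (if (G.zetaSet f1 σ q j).Nonempty then
        max (-((W : ℤ) * (lmax : ℤ))) (min 0 (zminAux (G.zetaSet f1 σ q j))) else 0)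
    else 0)
  else none

lemma succF_fsupp (lmax W : ℕ) (f1 : FMap G) (σ : G.A) (o : Set G.Q) :
    G.fsupp (G.succF lmax W f1 σ o) = G.postSet σ (G.fsupp f1) ∩ o := by
  ext q
  simp only [fsupp, succF, Set.mem_setOf_eq]
  by_cases h : q ∈ G.postSet σ (G.fsupp f1) ∩ o
  · simp [h]
  · simp [h]

lemma succF_fval (lmax W : ℕ) (f1 : FMap G) (σ : G.A) (o : Set G.Q) {q : G.Q}
    (hq : q ∈ G.postSet σ (G.fsupp f1) ∩ o) {j : ℕ} (hj : 1 ≤ j ∧ j ≤ lmax) :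
    G.fval (G.succF lmax W f1 σ o) q j =
      if (G.zetaSet f1 σ q j).Nonempty then
        max (-((W : ℤ) * (lmax : ℤ))) (min 0 (zminAux (G.zetaSet f1 σ q j))) else 0 := by
  unfold fval succF
  rw [if_pos hq]
  simp only [Option.getD_some]
  rw [if_pos hj]

lemma succF_valid (lmax W : ℕ) (f1 : FMap G) (σ : G.A) (o : Set G.Q) :
    G.ValidF lmax W (G.succF lmax W f1 σ o) := by
  intro q g hg
  unfold succF at hg
  split at hg
  · rw [Option.some.injEq] at hg
    subst hg
    constructor
    · intro i hi1 hi2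
      beta_reduce
      rw [if_pos ⟨hi1, hi2⟩]
      split
      · exact ⟨le_max_left _ _, max_le (WGA.neg_Wlmax_nonpos lmax W) (min_le_left _ _)⟩
      · exact ⟨WGA.neg_Wlmax_nonpos lmax W, le_refl 0⟩
    · intro i hi
      beta_reduce
      rw [if_neg]
      rintro ⟨h1, h2⟩
      rcases hi with rfl | hi <;> omega
  · exact absurd hg (by simp)

lemma succF_isSucc (lmax W : ℕ) (f1 : FMap G) (σ : G.A) {o : Set G.Q} (ho : o ∈ G.Obs) :
    G.IsSucc lmax W f1 σ (G.succF lmax W f1 σ o) := by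
  refine ⟨G.succF_valid lmax W f1 σ o, ⟨o, ho, G.succF_fsupp lmax W f1 σ o⟩, ?_⟩
  intro q hq j hj1 hjl
  rw [G.succF_fsupp lmax W f1 σ o] at hq
  rw [G.succF_fval lmax W f1 σ o hq ⟨hj1, hjl⟩]
  split
  case isTrue h =>
    exact Or.inr ⟨zminAux _,
      zminAux_isLeast (exists_isLeast_of_finite (G.zetaSet_finite f1 σ q j) h), rfl⟩
  case isFalse h =>
    refine Or.inl ⟨Set.not_nonempty_iff_eq_empty.mp h, ?_⟩
    rw [max_eq_right (WGA.neg_Wlmax_nonpos lmax W)]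

lemma succ_le {lmax W : ℕ} {f1 f2 : FMap G} {σ : G.A} {q : G.Q} {j : ℕ} {c b : ℤ}
    (hs : G.IsSucc lmax W f1 σ f2) (hq : q ∈ G.fsupp f2) (hj1 : 1 ≤ j) (hjl : j ≤ lmax)
    (hcZ : c ∈ G.zetaSet f1 σ q j) (hcb : c ≤ b) (hb : -((W : ℤ) * (lmax : ℤ)) ≤ b) :
    G.fval f2 q j ≤ b := by
  rcases hs.2.2 q hq j hj1 hjl with ⟨hemp, _⟩ | ⟨z, hz, hv⟩
  · rw [hemp] at hcZ; exact absurd hcZ (Set.notMem_empty c)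
  · rw [hv]
    exact max_le hb (le_trans (le_trans (min_le_right 0 z) (hz.2 hcZ)) hcb)

lemma fI_valid (lmax W : ℕ) : G.ValidF lmax W G.fI := by
  intro q g hg
  unfold fI at hg
  split at hg
  · rw [Option.some.injEq] at hg
    subst hg
    exact ⟨fun i _ _ => ⟨WGA.neg_Wlmax_nonpos lmax W, le_refl 0⟩, fun i _ => rfl⟩
  · exact absurd hg (by simp)

lemma fI_fsupp : G.fsupp G.fI = {G.qI} := by
  ext q
  simp only [fsupp, fI, Set.mem_setOf_eq, Set.mem_singleton_iff]
  split <;> simp [*]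

end WGA

/-- Lemma 5: if Eve wins the safety objective in `G'`, then the strategy
`λ(ρ) = λ'(supp⁻¹(ρ, f_I))` is winning for her for `DirFix(0,lmax)` in `G`. -/
theorem dirfix_correctness (G : WGA) (lmax W : ℕ) (hlmax : 1 ≤ lmax)
    (hW : ∀ p σ q, G.Δ p σ q → |G.w p σ q| ≤ (W : ℤ))
    (hqI : ({G.qI} : Set G.Q) ∈ G.Obs)
    (strP : List (WGA.FMap G × G.A) → WGA.FMap G → G.A)
    (hwinP : G.WinsSafeP lmax W strP)
    (str : List (Set G.Q × G.A) → Set G.Q → G.A)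
    (hrel : ∀ (obs : ℕ → Set G.Q) (act : ℕ → G.A) (n : ℕ) (fs : ℕ → WGA.FMap G),
      (∀ i, i ≤ n → obs i ∈ G.Obs) → G.qI ∈ obs 0 →
      fs 0 = G.fI →
      (∀ i, i < n →
        G.IsSucc lmax W (fs i) (act i) (fs (i + 1)) ∧
        G.fsupp (fs (i + 1)) ⊆ obs (i + 1)) →
      str (G.hist obs act n) (obs n) = strP (G.histP fs act n) (fs n)) :
    ∀ obs act, G.IsPlay obs act → G.Consistent str obs act → G.DirFix 0 lmax obs act := by
  intro obs act hplay hcons π hconc i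
  obtain ⟨hobs, hqI0, -⟩ := hplay
  obtain ⟨o0, -, huniq⟩ := G.obs_partition G.qI
  have hobs0 : obs 0 = ({G.qI} : Set G.Q) :=
    (huniq (obs 0) ⟨hobs 0, hqI0⟩).trans (huniq {G.qI} ⟨hqI, rfl⟩).symm
  let fs : ℕ → WGA.FMap G := fun n =>
    Nat.rec (motive := fun _ => WGA.FMap G) G.fI
      (fun n f => G.succF lmax W f (act n) (obs (n + 1))) n
  have hfs0 : fs 0 = G.fI := rfl
  have hfsS : ∀ n, fs (n + 1) = G.succF lmax W (fs n) (act n) (obs (n + 1)) := fun n => rfl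
  have hsucc : ∀ n, G.IsSucc lmax W (fs n) (act n) (fs (n + 1)) := fun n => by
    rw [hfsS]
    exact G.succF_isSucc lmax W (fs n) (act n) (hobs (n + 1))
  have hsuppS : ∀ n, G.fsupp (fs (n + 1)) = G.postSet (act n) (G.fsupp (fs n)) ∩ obs (n + 1) :=
    fun n => by rw [hfsS]; exact G.succF_fsupp lmax W (fs n) (act n) (obs (n + 1))
  have hsupp : ∀ n, G.fsupp (fs (n + 1)) ⊆ obs (n + 1) := fun n => by
    rw [hsuppS]; exact Set.inter_subset_right
  have hactP : ∀ n, act n = strP (G.histP fs act n) (fs n) := fun n => by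
    rw [hcons n]
    exact hrel obs act n fs (fun i _ => hobs i) hqI0 hfs0 (fun i _ => ⟨hsucc i, hsupp i⟩)
  have hnotFU := hwinP fs act hfs0 hsucc hactP
  have hValid : ∀ n, G.ValidF lmax W (fs n) := fun n => by
    cases n with
    | zero => exact G.fI_valid lmax W
    | succ n => exact (hsucc n).1
  have hπ : ∀ n, π n ∈ G.fsupp (fs n) := by
    intro n
    induction n with
    | zero =>
      rw [hfs0, G.fI_fsupp]
      have h0 := hconc.1 0
      rw [hobs0] at h0
      exact h0
    | succ n ih =>
      rw [hsuppS n]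
      exact ⟨⟨π n, ih, hconc.2 n⟩, hconc.1 (n + 1)⟩
  by_contra hgw
  unfold WGA.GW at hgw
  push_neg at hgw
  have hneg : ∀ j, 1 ≤ j → j ≤ lmax → G.winSum π act i j < 0 := by
    intro j hj1 hjl
    have h := hgw j hj1 hjl
    by_contra hc
    push_neg at hc
    have hd : (0 : ℚ) ≤ (G.winSum π act i j : ℚ) / (j : ℚ) :=
      div_nonneg (by exact_mod_cast hc) (by positivity)
    exact absurd hd (not_le.mpr h)
  have hlb : ∀ j, j ≤ lmax → -((W : ℤ) * (lmax : ℤ)) ≤ G.winSum π act i j := by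
    intro j hjl
    have h1 : ∑ k ∈ Finset.range j, (-(W : ℤ)) ≤ G.winSum π act i j := by
      unfold WGA.winSum
      refine Finset.sum_le_sum fun k _ => ?_
      exact (abs_le.mp (hW _ _ _ (hconc.2 (i + k)))).1
    rw [Finset.sum_const, Finset.card_range, nsmul_eq_mul] at h1
    have h2 : -((W : ℤ) * (lmax : ℤ)) ≤ (j : ℤ) * (-(W : ℤ)) := by
      have : (j : ℤ) ≤ (lmax : ℤ) := by exact_mod_cast hjl
      nlinarith [Int.ofNat_nonneg W]
    exact le_trans h2 h1
  have hmain : ∀ j, 1 ≤ j → j ≤ lmax →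
      G.fval (fs (i + j)) (π (i + j)) j ≤ G.winSum π act i j := by
    intro j
    induction j with
    | zero => intro h; omega
    | succ j ih =>
      intro _ hjl
      rcases Nat.eq_zero_or_pos j with rfl | hj1
      · -- base case j + 1 = 1
        have hS1 : G.winSum π act i 1 = G.w (π i) (act i) (π (i + 1)) := by
          unfold WGA.winSum
          simp [Finset.sum_range_one]
        have hcZ : G.w (π i) (act i) (π (i + 1)) ∈
            G.zetaSet (fs i) (act i) (π (i + 1)) 1 := by
          unfold WGA.zetaSet
          rw [if_pos rfl]
          exact ⟨π i, hπ i, hconc.2 i, rfl⟩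
        exact G.succ_le (hsucc i) (hπ (i + 1)) le_rfl hlmax hcZ (le_of_eq hS1.symm)
          (hlb 1 hlmax)
      · have hjl' : j ≤ lmax := Nat.le_of_succ_le hjl
        have ihj := ih hj1 hjl'
        have hfvlt : G.fval (fs (i + j)) (π (i + j)) j < 0 :=
          lt_of_le_of_lt ihj (hneg j hj1 hjl')
        have hS : G.winSum π act i (j + 1) =
            G.winSum π act i j + G.w (π (i + j)) (act (i + j)) (π (i + j + 1)) := by
          unfold WGA.winSum
          rw [Finset.sum_range_succ]
        have hcZ : G.fval (fs (i + j)) (π (i + j)) j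
              + G.w (π (i + j)) (act (i + j)) (π (i + j + 1)) ∈
            G.zetaSet (fs (i + j)) (act (i + j)) (π (i + j + 1)) (j + 1) := by
          unfold WGA.zetaSet
          rw [if_neg (by omega)]
          refine ⟨π (i + j), hπ (i + j), hconc.2 (i + j), ?_, ?_⟩
          · simpa using hfvlt
          · simp
        have hcb : G.fval (fs (i + j)) (π (i + j)) j
              + G.w (π (i + j)) (act (i + j)) (π (i + j + 1)) ≤
            G.winSum π act i (j + 1) := by
          rw [hS]
          exact add_le_add_left ihj _
        exact G.succ_le (hsucc (i + j)) (hπ (i + j + 1)) (by omega) hjl hcZ hcb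
          (hlb (j + 1) hjl)
  have hfin := hmain lmax hlmax le_rfl
  exact hnotFU (i + lmax)
    ⟨hValid _, π (i + lmax), hπ _, lt_of_le_of_lt hfin (hneg lmax hlmax le_rfl)⟩
end
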